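/- arXiv:2008.03365 — 5 statements merged into one kernel-verified Lean document; each statement's English description precedes it below -/
import Mathlib

section
/- Assume Φ and ω are compatible and X = {x_1,…,x_n} is a sampling set for Φ. For any data y ∈ ℝⁿ, the minimum weighted norm interpolants f_p (p_X ≤ p < ∞) converge to f_∞ in L^q_μ(Ω) as p → ∞, for every 2 ≤ q ≤ ∞. If in addition μ(Ω) < ∞, the convergence also holds in L^q_μ(Ω) for every 1 ≤ q < 2. -/
open MeasureTheory Filter Finset Matrix
open scoped ENNReal BigOperators

noncomputable section

/-- Truncated kernel `K_p(x,y) = ∑_{k<p} ω_k⁻¹ φ_k(x) φ_k(y)`. -/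
def Kpart {Ω : Type*} (ω : ℕ → ℝ) (φ : ℕ → Ω → ℝ) (p : ℕ) (x y : Ω) : ℝ :=
  ∑ k ∈ Finset.range p, (ω k)⁻¹ * φ k x * φ k y

/-- The matrix `𝐊_p = (K_p(x_i,x_j))`. -/
def KpartMat {Ω : Type*} (ω : ℕ → ℝ) (φ : ℕ → Ω → ℝ) {n : ℕ} (X : Fin n → Ω) (p : ℕ) :
    Matrix (Fin n) (Fin n) ℝ :=
  Matrix.of fun i j => Kpart ω φ p (X i) (X j)

/-- The matrix `𝐊 = (K(x_i,x_j))`. -/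
def KMat {Ω : Type*} (K : Ω → Ω → ℝ) {n : ℕ} (X : Fin n → Ω) : Matrix (Fin n) (Fin n) ℝ :=
  Matrix.of fun i j => K (X i) (X j)

/-- The minimum weighted norm interpolant `f_p(x) = ∑_k K_p(x,x_k) (𝐊_p⁻¹ y)_k`. -/
def interpP {Ω : Type*} (ω : ℕ → ℝ) (φ : ℕ → Ω → ℝ) {n : ℕ} (X : Fin n → Ω)
    (y : Fin n → ℝ) (p : ℕ) (x : Ω) : ℝ :=
  ∑ j, Kpart ω φ p x (X j) * ((KpartMat ω φ X p)⁻¹ *ᵥ y) j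

/-- The limiting interpolant `f_∞(x) = ∑_k K(x,x_k) (𝐊⁻¹ y)_k`. -/
def interpInf {Ω : Type*} (K : Ω → Ω → ℝ) {n : ℕ} (X : Fin n → Ω)
    (y : Fin n → ℝ) (x : Ω) : ℝ :=
  ∑ j, K x (X j) * ((KMat K X)⁻¹ *ᵥ y) j

section Aux

variable {Ω : Type*} [MetricSpace Ω] [MeasurableSpace Ω] [BorelSpace Ω] {μ : Measure Ω}

lemma phi_memL2 {φ : ℕ → Ω → ℝ} (hφcont : ∀ k, Continuous (φ k))
    (hortho : ∀ j k, ∫ x, φ j x * φ k x ∂μ = if j = k then 1 else 0) (k : ℕ) :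
    MemLp (φ k) 2 μ := by
  have hsm : AEStronglyMeasurable (φ k) μ :=
    ((hφcont k).stronglyMeasurable).aestronglyMeasurable
  rw [memLp_two_iff_integrable_sq hsm]
  by_contra h
  have h1 := hortho k k
  rw [if_pos rfl] at h1
  have h2 : ∫ x, φ k x * φ k x ∂μ = 0 := by
    refine integral_undef ?_
    simpa [pow_two] using h
  rw [h2] at h1
  norm_num at h1

lemma phi_mul_integrable {φ : ℕ → Ω → ℝ} (hφcont : ∀ k, Continuous (φ k))
    (hortho : ∀ j k, ∫ x, φ j x * φ k x ∂μ = if j = k then 1 else 0) (j k : ℕ) :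
    Integrable (fun x => φ j x * φ k x) μ := by
  have h1 := phi_memL2 hφcont hortho j
  have h2 := phi_memL2 hφcont hortho k
  have h3 : MemLp (φ j • φ k) 1 μ := by
    haveI : ENNReal.HolderTriple 2 2 1 := ⟨by rw [inv_one]; exact ENNReal.inv_two_add_inv_two⟩
    exact h2.smul h1
  have := memLp_one_iff_integrable.mp h3
  exact this

lemma integral_sq_finsum {φ : ℕ → Ω → ℝ} (hφcont : ∀ k, Continuous (φ k))
    (hortho : ∀ j k, ∫ x, φ j x * φ k x ∂μ = if j = k then 1 else 0)
    (s : Finset ℕ) (a : ℕ → ℝ) :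
    ∫ x, (∑ k ∈ s, a k * φ k x) ^ 2 ∂μ = ∑ k ∈ s, (a k) ^ 2 := by
  have expand : ∀ x : Ω, (∑ k ∈ s, a k * φ k x) ^ 2
      = ∑ k ∈ s, ∑ l ∈ s, (a k * a l) * (φ k x * φ l x) := by
    intro x
    rw [sq, Finset.sum_mul_sum]
    exact Finset.sum_congr rfl fun k _ => Finset.sum_congr rfl fun l _ => by ring
  simp_rw [expand]
  rw [integral_finset_sum _ (fun k _ => integrable_finset_sum _
    (fun l _ => ((phi_mul_integrable hφcont hortho k l).const_mul _)))]
  have : ∀ k ∈ s, ∫ x, ∑ l ∈ s, (a k * a l) * (φ k x * φ l x) ∂μ = (a k) ^ 2 := by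
    intro k hk
    rw [integral_finset_sum _ (fun l _ => ((phi_mul_integrable hφcont hortho k l).const_mul _))]
    have : ∀ l ∈ s, ∫ x, (a k * a l) * (φ k x * φ l x) ∂μ
        = if k = l then a k * a l else 0 := by
      intro l _
      rw [integral_const_mul, hortho k l]
      split <;> simp
    rw [Finset.sum_congr rfl this, Finset.sum_ite_eq s k (fun l => a k * a l), if_pos hk, sq]
  rw [Finset.sum_congr rfl this]

lemma integrable_sq_finsum {φ : ℕ → Ω → ℝ} (hφcont : ∀ k, Continuous (φ k))
    (hortho : ∀ j k, ∫ x, φ j x * φ k x ∂μ = if j = k then 1 else 0)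
    (s : Finset ℕ) (a : ℕ → ℝ) :
    Integrable (fun x => (∑ k ∈ s, a k * φ k x) ^ 2) μ := by
  have expand : ∀ x : Ω, (∑ k ∈ s, a k * φ k x) ^ 2
      = ∑ k ∈ s, ∑ l ∈ s, (a k * a l) * (φ k x * φ l x) := by
    intro x
    rw [sq, Finset.sum_mul_sum]
    exact Finset.sum_congr rfl fun k _ => Finset.sum_congr rfl fun l _ => by ring
  simp_rw [expand]
  exact integrable_finset_sum _ (fun k _ => integrable_finset_sum _
    (fun l _ => ((phi_mul_integrable hφcont hortho k l).const_mul _)))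

lemma tendsto_L2_kernel {φ : ℕ → Ω → ℝ} (hφcont : ∀ k, Continuous (φ k))
    (hortho : ∀ j k, ∫ x, φ j x * φ k x ∂μ = if j = k then 1 else 0)
    {ω : ℕ → ℝ} (hωpos : ∀ k, 0 < ω k) (hωtop : Tendsto ω atTop atTop)
    {K : Ω → Ω → ℝ}
    (hKabs : ∀ x y : Ω, Summable fun k => |(ω k)⁻¹ * φ k x * φ k y|)
    (hKsum : ∀ x y : Ω, HasSum (fun k => (ω k)⁻¹ * φ k x * φ k y) (K x y))
    (y0 : Ω) :
    Tendsto (fun p => eLpNorm (fun x => K x y0 - Kpart ω φ p x y0) 2 μ) atTop (nhds 0)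
    ∧ ∀ p, eLpNorm (fun x => K x y0 - Kpart ω φ p x y0) 2 μ < ⊤ := by
  set b : ℕ → ℝ := fun k => ((ω k)⁻¹ * φ k y0) ^ 2 with hb_def
  have hb_nonneg : ∀ k, 0 ≤ b k := fun k => sq_nonneg _
  set a : ℕ → ℝ := fun k => (ω k)⁻¹ * φ k y0 * φ k y0 with ha_def
  have ha_nonneg : ∀ k, 0 ≤ a k := by
    intro k
    have : a k = (ω k)⁻¹ * (φ k y0 * φ k y0) := by simp [ha_def]; ring
    rw [this]
    exact mul_nonneg (inv_nonneg.mpr (hωpos k).le) (mul_self_nonneg _)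
  have ha_sum : Summable a := summable_abs_iff.mp (hKabs y0 y0)
  have hb_le : ∀ k, 1 ≤ ω k → b k ≤ a k := by
    intro k hk
    have h1 : b k = (ω k)⁻¹ * a k := by simp [hb_def, ha_def]; ring
    rw [h1]
    exact mul_le_of_le_one_left (ha_nonneg k) (inv_le_one_of_one_le₀ hk)
  have hb_sum : Summable b := by
    obtain ⟨N, hN⟩ := eventually_atTop.mp (hωtop.eventually_ge_atTop 1)
    have h1 : Summable fun k => b (k + N) :=
      Summable.of_nonneg_of_le (fun k => hb_nonneg _)
        (fun k => hb_le _ (hN _ (Nat.le_add_left N k)))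
        ((summable_nat_add_iff N).mpr ha_sum)
    exact (summable_nat_add_iff N).mp h1
  set T : ℕ → ℝ := fun p => ∑' k, b (k + p) with hT_def
  have hT0 : Tendsto T atTop (nhds 0) := tendsto_sum_nat_add b
  have hT_nonneg : ∀ p, 0 ≤ T p := fun p => tsum_nonneg (fun k => hb_nonneg _)
  -- partial differences
  have hdiff : ∀ p q : ℕ, p ≤ q → ∀ x : Ω,
      Kpart ω φ q x y0 - Kpart ω φ p x y0
        = ∑ k ∈ Finset.Ico p q, ((ω k)⁻¹ * φ k y0) * φ k x := by
    intro p q hpq x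
    rw [Finset.sum_Ico_eq_sub _ hpq]
    simp only [Kpart]
    congr 1 <;> exact Finset.sum_congr rfl fun k _ => by ring
  -- lintegral of squared partial differences
  have hlin : ∀ p q : ℕ, p ≤ q →
      (∫⁻ x, (‖Kpart ω φ q x y0 - Kpart ω φ p x y0‖₊ : ℝ≥0∞) ^ (2:ℝ) ∂μ)
        = ENNReal.ofReal (∑ k ∈ Finset.Ico p q, b k) := by
    intro p q hpq
    set g : Ω → ℝ := fun x => Kpart ω φ q x y0 - Kpart ω φ p x y0 with hg_def
    have hg_eq : ∀ x, g x = ∑ k ∈ Finset.Ico p q, ((ω k)⁻¹ * φ k y0) * φ k x :=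
      hdiff p q hpq
    have hnn : ∀ x, (‖g x‖₊ : ℝ≥0∞) ^ (2:ℝ) = ENNReal.ofReal (g x ^ 2) := by
      intro x
      rw [show (‖g x‖₊ : ℝ≥0∞) = ENNReal.ofReal ‖g x‖ by rw [ofReal_norm]; rfl, ENNReal.ofReal_rpow_of_nonneg (norm_nonneg _) (by norm_num : (0:ℝ) ≤ 2)]
      congr 1
      rw [Real.norm_eq_abs, show ((2:ℝ) = ((2:ℕ):ℝ)) by norm_num, Real.rpow_natCast, sq_abs]
    have hint : Integrable (fun x => g x ^ 2) μ := by
      have := integrable_sq_finsum hφcont hortho (Finset.Ico p q) (fun k => (ω k)⁻¹ * φ k y0)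
      exact this.congr (Filter.Eventually.of_forall fun x => by simp only [];rw [hg_eq x])
    calc (∫⁻ x, (‖g x‖₊ : ℝ≥0∞) ^ (2:ℝ) ∂μ) = ∫⁻ x, ENNReal.ofReal (g x ^ 2) ∂μ := by
          simp_rw [hnn]
      _ = ENNReal.ofReal (∫ x, g x ^ 2 ∂μ) :=
          (ofReal_integral_eq_lintegral_ofReal hint
            (Filter.Eventually.of_forall fun x => sq_nonneg _)).symm
      _ = ENNReal.ofReal (∑ k ∈ Finset.Ico p q, b k) := by
          congr 1
          have : ∫ x, g x ^ 2 ∂μ = ∑ k ∈ Finset.Ico p q, ((ω k)⁻¹ * φ k y0) ^ 2 := by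
            rw [show (fun x => g x ^ 2) = fun x => (∑ k ∈ Finset.Ico p q, ((ω k)⁻¹ * φ k y0) * φ k x) ^ 2 from funext fun x => by rw [hg_eq x]]
            exact integral_sq_finsum hφcont hortho _ _
          rw [this]
  -- tail sum bound
  have hIco_le : ∀ p q : ℕ, ∑ k ∈ Finset.Ico p q, b k ≤ T p := by
    intro p q
    rw [Finset.sum_Ico_eq_sum_range]
    calc ∑ k ∈ Finset.range (q - p), b (p + k)
        = ∑ k ∈ Finset.range (q - p), b (k + p) := by
          exact Finset.sum_congr rfl fun k _ => by rw [Nat.add_comm]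
      _ ≤ T p := Summable.sum_le_tsum _ (fun k _ => hb_nonneg _) ((summable_nat_add_iff p).mpr hb_sum)
  -- Fatou bound
  have hKey : ∀ p, (∫⁻ x, (‖K x y0 - Kpart ω φ p x y0‖₊ : ℝ≥0∞) ^ (2:ℝ) ∂μ)
      ≤ ENNReal.ofReal (T p) := by
    intro p
    have hmeas : ∀ q : ℕ, Measurable fun x =>
        (‖Kpart ω φ q x y0 - Kpart ω φ p x y0‖₊ : ℝ≥0∞) ^ (2:ℝ) := by
      intro q
      have hc : ∀ r : ℕ, Continuous fun x => Kpart ω φ r x y0 := by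
        intro r
        exact continuous_finset_sum _ fun k _ => (continuous_const.mul (hφcont k)).mul continuous_const
      exact (ENNReal.continuous_rpow_const.comp (ENNReal.continuous_coe.comp
        (((hc q).sub (hc p)).nnnorm))).measurable
    have hpt : ∀ x : Ω, (‖K x y0 - Kpart ω φ p x y0‖₊ : ℝ≥0∞) ^ (2:ℝ)
        = Filter.liminf (fun q => (‖Kpart ω φ q x y0 - Kpart ω φ p x y0‖₊ : ℝ≥0∞) ^ (2:ℝ)) atTop := by
      intro x
      have h1 : Tendsto (fun q => Kpart ω φ q x y0) atTop (nhds (K x y0)) := by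
        have := (hKsum x y0).tendsto_sum_nat
        exact this
      have h2 : Tendsto (fun q => Kpart ω φ q x y0 - Kpart ω φ p x y0) atTop
          (nhds (K x y0 - Kpart ω φ p x y0)) := h1.sub tendsto_const_nhds
      have h3 : Tendsto (fun q => (‖Kpart ω φ q x y0 - Kpart ω φ p x y0‖₊ : ℝ≥0∞) ^ (2:ℝ))
          atTop (nhds ((‖K x y0 - Kpart ω φ p x y0‖₊ : ℝ≥0∞) ^ (2:ℝ))) := by
        exact (ENNReal.continuous_rpow_const.tendsto _).comp
          ((ENNReal.tendsto_coe.mpr h2.nnnorm))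
      exact (h3.liminf_eq).symm
    calc (∫⁻ x, (‖K x y0 - Kpart ω φ p x y0‖₊ : ℝ≥0∞) ^ (2:ℝ) ∂μ)
        = ∫⁻ x, Filter.liminf (fun q => (‖Kpart ω φ q x y0 - Kpart ω φ p x y0‖₊ : ℝ≥0∞) ^ (2:ℝ)) atTop ∂μ := by
          simp_rw [hpt]
      _ ≤ Filter.liminf (fun q => ∫⁻ x, (‖Kpart ω φ q x y0 - Kpart ω φ p x y0‖₊ : ℝ≥0∞) ^ (2:ℝ) ∂μ) atTop :=
          lintegral_liminf_le hmeas
      _ ≤ ENNReal.ofReal (T p) := by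
          refine Filter.liminf_le_of_frequently_le' ?_
          refine Filter.Eventually.frequently ?_
          filter_upwards [Filter.eventually_ge_atTop p] with q hq
          rw [hlin p q hq]
          exact ENNReal.ofReal_le_ofReal (hIco_le p q)
  -- translate to eLpNorm
  have heLp : ∀ p, eLpNorm (fun x => K x y0 - Kpart ω φ p x y0) 2 μ
      ≤ (ENNReal.ofReal (T p)) ^ (1/2 : ℝ) := by
    intro p
    rw [eLpNorm_eq_lintegral_rpow_enorm_toReal (by norm_num) (by norm_num)]
    have h2 : (2 : ℝ≥0∞).toReal = (2:ℝ) := by norm_num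
    rw [h2]
    exact ENNReal.rpow_le_rpow (hKey p) (by norm_num)
  constructor
  · have hRHS : Tendsto (fun p => (ENNReal.ofReal (T p)) ^ (1/2 : ℝ)) atTop (nhds 0) := by
      have h1 : Tendsto (fun p => ENNReal.ofReal (T p)) atTop (nhds 0) := by
        have := ENNReal.tendsto_ofReal hT0
        simpa using this
      have h2 := ((ENNReal.continuous_rpow_const (y := (1/2:ℝ))).tendsto (0:ℝ≥0∞)).comp h1
      simpa [ENNReal.zero_rpow_of_pos (by norm_num : (0:ℝ) < 1/2), Function.comp_def] using h2
    exact tendsto_of_tendsto_of_tendsto_of_le_of_le tendsto_const_nhds hRHS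
      (fun p => zero_le) heLp
  · intro p
    exact lt_of_le_of_lt (heLp p)
      (ENNReal.rpow_lt_top_of_nonneg (by norm_num) ENNReal.ofReal_ne_top)

omit [MetricSpace Ω] [BorelSpace Ω] in
lemma tendsto_Linf_kernel {ω : ℕ → ℝ} {φ : ℕ → Ω → ℝ} {K : Ω → Ω → ℝ}
    [MetricSpace Ω]
    (hKunif : TendstoUniformly (fun p (z : Ω × Ω) => Kpart ω φ p z.1 z.2)
      (fun z => K z.1 z.2) atTop) (y0 : Ω) :
    Tendsto (fun p => eLpNorm (fun x => K x y0 - Kpart ω φ p x y0) ⊤ μ) atTop (nhds 0) := by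
  rw [ENNReal.tendsto_nhds_zero]
  intro ε hε
  obtain ⟨δ, hδpos, hδle⟩ : ∃ δ : ℝ, 0 < δ ∧ ENNReal.ofReal δ ≤ ε := by
    rcases eq_or_ne ε ⊤ with h | h
    · exact ⟨1, one_pos, by simp [h]⟩
    · refine ⟨ε.toReal, ENNReal.toReal_pos hε.ne' h, by rw [ENNReal.ofReal_toReal h]⟩
  have hev := (Metric.tendstoUniformly_iff.mp hKunif) δ hδpos
  filter_upwards [hev] with p hp
  have hb : ∀ x : Ω, ‖K x y0 - Kpart ω φ p x y0‖ ≤ δ := by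
    intro x
    have := hp (x, y0)
    rw [Real.dist_eq] at this
    exact le_of_lt this
  calc eLpNorm (fun x => K x y0 - Kpart ω φ p x y0) ⊤ μ
      = eLpNormEssSup (fun x => K x y0 - Kpart ω φ p x y0) μ := eLpNorm_exponent_top
    _ ≤ ENNReal.ofReal δ := eLpNormEssSup_le_of_ae_bound (Filter.Eventually.of_forall hb)
    _ ≤ ε := hδle

omit [MetricSpace Ω] [MeasurableSpace Ω] [BorelSpace Ω] in
lemma kmat_invertible {ω : ℕ → ℝ} {φ : ℕ → Ω → ℝ} {K : Ω → Ω → ℝ}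
    (hωpos : ∀ k, 0 < ω k)
    (hKabs : ∀ x y : Ω, Summable fun k => |(ω k)⁻¹ * φ k x * φ k y|)
    (hKsum : ∀ x y : Ω, HasSum (fun k => (ω k)⁻¹ * φ k x * φ k y) (K x y))
    {n : ℕ} (X : Fin n → Ω) (pX : ℕ)
    (hpX : ∀ y : Fin n → ℝ, ∃ c : ℕ → ℝ, ∀ j, ∑ k ∈ Finset.range pX, c k * φ k (X j) = y j) :
    IsUnit (KMat K X).det := by
  rw [isUnit_iff_ne_zero]
  intro hdet
  obtain ⟨v, hv0, hv⟩ := (Matrix.exists_mulVec_eq_zero_iff).mpr hdet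
  set g : ℕ → ℝ := fun k => (ω k)⁻¹ * (∑ i, v i * φ k (X i)) ^ 2 with hg_def
  have hg_nonneg : ∀ k, 0 ≤ g k :=
    fun k => mul_nonneg (inv_nonneg.mpr (hωpos k).le) (sq_nonneg _)
  have hker : ∀ k, g k = ∑ i, ∑ j, v i * (v j * ((ω k)⁻¹ * φ k (X i) * φ k (X j))) := by
    intro k
    have h1 : (∑ i, v i * φ k (X i)) ^ 2 = ∑ i, ∑ j, (v i * φ k (X i)) * (v j * φ k (X j)) := by
      rw [sq, Finset.sum_mul_sum]
    simp only [hg_def]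
    rw [h1, Finset.mul_sum]
    refine Finset.sum_congr rfl fun i _ => ?_
    rw [Finset.mul_sum]
    exact Finset.sum_congr rfl fun j _ => by ring
  have hsum_ij : ∀ i j : Fin n, Summable fun k => v i * (v j * ((ω k)⁻¹ * φ k (X i) * φ k (X j))) := by
    intro i j
    exact ((summable_abs_iff.mp (hKabs (X i) (X j))).mul_left (v j)).mul_left (v i)
  have hg_sum : Summable g := by
    rw [funext hker]
    exact summable_sum fun i _ => summable_sum fun j _ => hsum_ij i j
  have hts : ∑' k, g k = 0 := by
    have h0 : v ⬝ᵥ (KMat K X *ᵥ v) = 0 := by rw [hv]; simp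
    have h1 : v ⬝ᵥ (KMat K X *ᵥ v) = ∑ i, ∑ j, v i * (v j * K (X i) (X j)) := by
      simp only [dotProduct, mulVec, KMat, Matrix.of_apply]
      refine Finset.sum_congr rfl fun i _ => ?_
      rw [Finset.mul_sum]
      refine Finset.sum_congr rfl fun j _ => by ring
    have h2 : ∀ i j : Fin n, v i * (v j * K (X i) (X j))
        = ∑' k, v i * (v j * ((ω k)⁻¹ * φ k (X i) * φ k (X j))) := by
      intro i j
      rw [← (hKsum (X i) (X j)).tsum_eq, ← tsum_mul_left, ← tsum_mul_left]
    calc ∑' k, g k = ∑' k, ∑ i, ∑ j, v i * (v j * ((ω k)⁻¹ * φ k (X i) * φ k (X j))) :=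
          tsum_congr hker
      _ = ∑ i, ∑' k, ∑ j, v i * (v j * ((ω k)⁻¹ * φ k (X i) * φ k (X j))) :=
          Summable.tsum_finsetSum fun i _ => summable_sum fun j _ => hsum_ij i j
      _ = ∑ i, ∑ j, ∑' k, v i * (v j * ((ω k)⁻¹ * φ k (X i) * φ k (X j))) :=
          Finset.sum_congr rfl fun i _ => Summable.tsum_finsetSum fun j _ => hsum_ij i j
      _ = ∑ i, ∑ j, v i * (v j * K (X i) (X j)) :=
          Finset.sum_congr rfl fun i _ => Finset.sum_congr rfl fun j _ => (h2 i j).symm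
      _ = 0 := by rw [← h1, h0]
  have hg0 : ∀ k, g k = 0 := by
    intro k
    have hle : g k ≤ 0 := hts ▸ Summable.le_tsum hg_sum k fun j _ => hg_nonneg j
    exact le_antisymm hle (hg_nonneg k)
  have hzero : ∀ k, ∑ i, v i * φ k (X i) = 0 := by
    intro k
    have h := hg0 k
    rw [hg_def] at h
    simp only at h
    rcases mul_eq_zero.mp h with h | h
    · exact absurd h (ne_of_gt (inv_pos.mpr (hωpos k)))
    · exact pow_eq_zero_iff two_ne_zero |>.mp h
  obtain ⟨c, hc⟩ := hpX v
  have hvsq : ∑ j, v j * v j = 0 := by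
    calc ∑ j, v j * v j = ∑ j, v j * (∑ k ∈ Finset.range pX, c k * φ k (X j)) := by
          refine Finset.sum_congr rfl fun j _ => by rw [hc j]
      _ = ∑ k ∈ Finset.range pX, c k * (∑ j, v j * φ k (X j)) := by
          simp only [Finset.mul_sum]
          rw [Finset.sum_comm]
          exact Finset.sum_congr rfl fun k _ => Finset.sum_congr rfl fun j _ => by ring
      _ = 0 := by
          refine Finset.sum_eq_zero fun k _ => ?_
          rw [hzero k, mul_zero]
  have : ∀ j ∈ Finset.univ, v j * v j = 0 := by
    intro j _
    have := (Finset.sum_eq_zero_iff_of_nonneg (fun j _ => mul_self_nonneg (v j))).mp hvsq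
    exact this j (Finset.mem_univ j)
  apply hv0
  funext j
  exact mul_self_eq_zero.mp (this j (Finset.mem_univ j))

omit [MetricSpace Ω] [MeasurableSpace Ω] [BorelSpace Ω] in
lemma tendsto_coef {ω : ℕ → ℝ} {φ : ℕ → Ω → ℝ} {K : Ω → Ω → ℝ}
    (hKsum : ∀ x y : Ω, HasSum (fun k => (ω k)⁻¹ * φ k x * φ k y) (K x y))
    {n : ℕ} {X : Fin n → Ω} (hdet : IsUnit (KMat K X).det) (y : Fin n → ℝ) :
    Tendsto (fun p => (KpartMat ω φ X p)⁻¹ *ᵥ y) atTop (nhds ((KMat K X)⁻¹ *ᵥ y)) := by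
  have hmat : Tendsto (fun p => KpartMat ω φ X p) atTop (nhds (KMat K X)) := by
    refine tendsto_pi_nhds.mpr ?_
    intro i
    rw [tendsto_pi_nhds]
    intro j
    exact (hKsum (X i) (X j)).tendsto_sum_nat
  have hinv : Tendsto (fun p => (KpartMat ω φ X p)⁻¹) atTop (nhds (KMat K X)⁻¹) := by
    have hC : ContinuousAt Inv.inv (KMat K X) := by
      refine continuousAt_matrix_inv _ ?_
      rw [Ring.inverse_eq_inv']
      exact continuousAt_inv₀ hdet.ne_zero
    exact hC.tendsto.comp hmat
  rw [tendsto_pi_nhds]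
  intro i
  simp only [Matrix.mulVec, dotProduct]
  exact tendsto_finset_sum _ fun j _ =>
    ((tendsto_pi_nhds.mp (tendsto_pi_nhds.mp hinv i)) j).mul tendsto_const_nhds

lemma eLpNorm_le_interp {α : Type*} [MeasurableSpace α] {ν : Measure α} {f : α → ℝ}
    (hf : AEStronglyMeasurable f ν) {q : ℝ≥0∞} (hq2 : 2 ≤ q) (hqt : q ≠ ⊤) :
    eLpNorm f q ν ≤ (eLpNorm f ⊤ ν) ^ (1 - 2 / q.toReal) * (eLpNorm f 2 ν) ^ (2 / q.toReal) := by
  have hq0 : q ≠ 0 := by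
    intro h; rw [h] at hq2; exact absurd hq2 (by norm_num)
  have hr2 : (2:ℝ) ≤ q.toReal := by
    have := ENNReal.toReal_mono hqt hq2
    simpa using this
  have hr0 : (0:ℝ) < q.toReal := by linarith
  set r : ℝ := q.toReal with hr_def
  by_cases hq_eq : q = 2
  · subst hq_eq
    have hr : r = 2 := by rw [hr_def]; norm_num
    rw [hr]
    norm_num [ENNReal.rpow_zero, ENNReal.rpow_one]
  by_cases hf2 : eLpNorm f 2 ν = 0
  · have hf0 : f =ᵐ[ν] 0 := (eLpNorm_eq_zero_iff hf (by norm_num)).mp hf2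
    rw [eLpNorm_congr_ae hf0, eLpNorm_zero]
    exact zero_le
  have hrs : (2:ℝ) < r := by
    rcases lt_or_eq_of_le hr2 with h | h
    · exact h
    · exfalso
      apply hq_eq
      have : ((2:ℝ≥0∞)).toReal = q.toReal := by rw [← hr_def, ← h]; norm_num
      exact ((ENNReal.toReal_eq_toReal_iff' (by norm_num) hqt).mp this).symm
  set A : ℝ≥0∞ := eLpNormEssSup f ν with hA_def
  by_cases hA : A = ⊤
  · have hpos1 : (0:ℝ) < 1 - 2/r := by
      have h2 : 2/r < 1 := by rw [div_lt_one hr0]; exact hrs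
      linarith
    rw [eLpNorm_exponent_top, ← hA_def, hA]
    rw [ENNReal.top_rpow_of_pos hpos1]
    rw [ENNReal.top_mul]
    · exact le_top
    · intro h
      rw [ENNReal.rpow_eq_zero_iff] at h
      rcases h with ⟨h1, _⟩ | ⟨_, h3⟩
      · exact hf2 h1
      · have : 0 < 2/r := by positivity
        linarith
  · -- main case
    have hbound : (∫⁻ x, (‖f x‖₊ : ℝ≥0∞) ^ r ∂ν)
        ≤ A ^ (r - 2) * ∫⁻ x, (‖f x‖₊ : ℝ≥0∞) ^ (2:ℝ) ∂ν := by
      rw [← lintegral_const_mul' _ _ (ENNReal.rpow_ne_top_of_nonneg (by linarith) hA)]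
      refine lintegral_mono_ae ?_
      filter_upwards [enorm_ae_le_eLpNormEssSup f ν] with x hx
      by_cases hx0 : (‖f x‖₊ : ℝ≥0∞) = 0
      · rw [hx0, ENNReal.zero_rpow_of_pos (by linarith)]
        exact zero_le
      · calc (‖f x‖₊ : ℝ≥0∞) ^ r = (‖f x‖₊ : ℝ≥0∞) ^ (r - 2) * (‖f x‖₊ : ℝ≥0∞) ^ (2:ℝ) := by
              rw [← ENNReal.rpow_add _ _ hx0 ENNReal.coe_ne_top]
              norm_num
          _ ≤ A ^ (r - 2) * (‖f x‖₊ : ℝ≥0∞) ^ (2:ℝ) :=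
            mul_le_mul_left (ENNReal.rpow_le_rpow hx (by linarith)) _
    have h2eq : eLpNorm f 2 ν = (∫⁻ x, (‖f x‖₊ : ℝ≥0∞) ^ (2:ℝ) ∂ν) ^ (1/2 : ℝ) := by
      rw [eLpNorm_eq_lintegral_rpow_enorm_toReal (by norm_num) (by norm_num)]
      norm_num
      rfl
    rw [eLpNorm_eq_lintegral_rpow_enorm_toReal hq0 hqt, eLpNorm_exponent_top, ← hA_def, ← hr_def]
    calc (∫⁻ x, (‖f x‖₊ : ℝ≥0∞) ^ r ∂ν) ^ (1/r)
        ≤ (A ^ (r - 2) * ∫⁻ x, (‖f x‖₊ : ℝ≥0∞) ^ (2:ℝ) ∂ν) ^ (1/r) :=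
          ENNReal.rpow_le_rpow hbound (by positivity)
      _ = A ^ ((r-2) * (1/r)) * (∫⁻ x, (‖f x‖₊ : ℝ≥0∞) ^ (2:ℝ) ∂ν) ^ (1/r) := by
          rw [ENNReal.mul_rpow_of_nonneg _ _ (by positivity), ← ENNReal.rpow_mul]
      _ = A ^ (1 - 2/r) * (eLpNorm f 2 ν) ^ (2/r) := by
          rw [h2eq, ← ENNReal.rpow_mul]
          congr 2
          · field_simp
          · field_simp

end Aux

/-- If `Φ` and `ω` are compatible and `X` is a sampling set for `Φ`, then for any
data `y`, the minimum weighted norm interpolants `f_p` converge to `f_∞` in `L^q_μ(Ω)` for every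
`2 ≤ q ≤ ∞`, and if moreover `μ(Ω) < ∞`, also for every `1 ≤ q < 2`. -/
theorem min_norm_interpolants_converge
    {Ω : Type*} [MetricSpace Ω] [MeasurableSpace Ω] [BorelSpace Ω] (μ : Measure Ω)
    (hμpos : ∀ U : Set Ω, IsOpen U → U.Nonempty → 0 < μ U)
    (Ωm : ℕ → Set Ω) (hΩcpt : ∀ m, IsCompact (Ωm m)) (hΩmono : Monotone Ωm)
    (hΩfin : ∀ m, μ (Ωm m) < ⊤) (hΩunion : (⋃ m, Ωm m) = Set.univ)
    (φ : ℕ → Ω → ℝ) (hφcont : ∀ k, Continuous (φ k))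
    (hortho : ∀ j k, ∫ x, φ j x * φ k x ∂μ = if j = k then 1 else 0)
    (ω : ℕ → ℝ) (hωpos : ∀ k, 0 < ω k) (hωtop : Tendsto ω atTop atTop)
    (K : Ω → Ω → ℝ)
    (hKabs : ∀ x y : Ω, Summable fun k => |(ω k)⁻¹ * φ k x * φ k y|)
    (hKsum : ∀ x y : Ω, HasSum (fun k => (ω k)⁻¹ * φ k x * φ k y) (K x y))
    (hKunif : TendstoUniformly (fun p (z : Ω × Ω) => Kpart ω φ p z.1 z.2)
      (fun z => K z.1 z.2) atTop)
    (hKbdd : ∃ M : ℝ, ∀ x y : Ω, |K x y| ≤ M)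
    (hKcont : Continuous fun z : Ω × Ω => K z.1 z.2)
    (hKL2 : MemLp (fun z : Ω × Ω => K z.1 z.2) 2 (μ.prod μ))
    {n : ℕ} (X : Fin n → Ω) (hXinj : Function.Injective X)
    (pX : ℕ)
    (hpX : ∀ y : Fin n → ℝ, ∃ c : ℕ → ℝ, ∀ j, ∑ k ∈ Finset.range pX, c k * φ k (X j) = y j)
    (y : Fin n → ℝ) :
    (∀ q : ℝ≥0∞, 2 ≤ q →
      Tendsto (fun p => eLpNorm (fun x => interpP ω φ X y p x - interpInf K X y x) q μ)
        atTop (nhds 0)) ∧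
    (μ Set.univ < ⊤ → ∀ q : ℝ≥0∞, 1 ≤ q → q < 2 →
      Tendsto (fun p => eLpNorm (fun x => interpP ω φ X y p x - interpInf K X y x) q μ)
        atTop (nhds 0)) := by
  -- continuity facts
  have hKy : ∀ j, Continuous fun x => K x (X j) := fun j =>
    hKcont.comp (continuous_id.prodMk continuous_const)
  have hKpy : ∀ p j, Continuous fun x => Kpart ω φ p x (X j) := fun p j =>
    continuous_finset_sum _ fun k _ => (continuous_const.mul (hφcont k)).mul continuous_const
  have hmeasK : ∀ j, AEStronglyMeasurable (fun x => K x (X j)) μ := fun j =>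
    (hKy j).stronglyMeasurable.aestronglyMeasurable
  have hmeasD : ∀ p j, AEStronglyMeasurable (fun x => Kpart ω φ p x (X j) - K x (X j)) μ :=
    fun p j => (((hKpy p j).sub (hKy j))).stronglyMeasurable.aestronglyMeasurable
  have hmeasDiff : ∀ p, AEStronglyMeasurable
      (fun x => interpP ω φ X y p x - interpInf K X y x) μ := by
    intro p
    have : Continuous fun x => interpP ω φ X y p x - interpInf K X y x := by
      apply Continuous.sub
      · exact continuous_finset_sum _ fun j _ => (hKpy p j).mul continuous_const
      · exact continuous_finset_sum _ fun j _ => (hKy j).mul continuous_const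
    exact this.stronglyMeasurable.aestronglyMeasurable
  -- coefficients
  have hdet : IsUnit (KMat K X).det := kmat_invertible hωpos hKabs hKsum X pX hpX
  have hcoef : Tendsto (fun p => (KpartMat ω φ X p)⁻¹ *ᵥ y) atTop
      (nhds ((KMat K X)⁻¹ *ᵥ y)) := tendsto_coef hKsum hdet y
  have hcoefj : ∀ j, Tendsto (fun p => ((KpartMat ω φ X p)⁻¹ *ᵥ y) j) atTop
      (nhds (((KMat K X)⁻¹ *ᵥ y) j)) := fun j => (tendsto_pi_nhds.mp hcoef) j
  -- kernel convergence in L2 and Linf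
  have hL2 := fun j => tendsto_L2_kernel hφcont hortho hωpos hωtop hKabs hKsum (X j)
  have hLinf := fun j => tendsto_Linf_kernel (μ := μ) hKunif (X j)
  -- L∞ finiteness of K(·, X j)
  obtain ⟨M, hM⟩ := hKbdd
  have hEinf : ∀ j, eLpNorm (fun x => K x (X j)) ⊤ μ ≠ ⊤ := by
    intro j
    have : eLpNorm (fun x => K x (X j)) ⊤ μ ≤ ENNReal.ofReal M := by
      rw [eLpNorm_exponent_top]
      exact eLpNormEssSup_le_of_ae_bound
        (Filter.Eventually.of_forall fun x => by rw [Real.norm_eq_abs]; exact hM x (X j))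
    exact (this.trans_lt ENNReal.ofReal_lt_top).ne
  have hE2 : ∀ j, eLpNorm (fun x => K x (X j)) 2 μ ≠ ⊤ := by
    intro j
    have h0 := (hL2 j).2 0
    have heq : (fun x => K x (X j) - Kpart ω φ 0 x (X j)) = fun x => K x (X j) := by
      funext x; simp [Kpart]
    rw [heq] at h0
    exact h0.ne
  -- master convergence for exponent q'
  have master : ∀ q' : ℝ≥0∞, 1 ≤ q' →
      (∀ j, Tendsto (fun p => eLpNorm (fun x => K x (X j) - Kpart ω φ p x (X j)) q' μ)
        atTop (nhds 0)) →
      (∀ j, eLpNorm (fun x => K x (X j)) q' μ ≠ ⊤) →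
      Tendsto (fun p => eLpNorm (fun x => interpP ω φ X y p x - interpInf K X y x) q' μ)
        atTop (nhds 0) := by
    intro q' hq1 hDj hEj
    set c : Fin n → ℝ := (KMat K X)⁻¹ *ᵥ y with hc
    set cp : ℕ → Fin n → ℝ := fun p => (KpartMat ω φ X p)⁻¹ *ᵥ y with hcp
    have hbound : ∀ p, eLpNorm (fun x => interpP ω φ X y p x - interpInf K X y x) q' μ
        ≤ ∑ j : Fin n, ((‖cp p j‖₊ : ℝ≥0∞)
            * eLpNorm (fun x => K x (X j) - Kpart ω φ p x (X j)) q' μ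
          + (‖cp p j - c j‖₊ : ℝ≥0∞) * eLpNorm (fun x => K x (X j)) q' μ) := by
      intro p
      have heq : (fun x => interpP ω φ X y p x - interpInf K X y x)
          = ∑ j : Fin n, ((cp p j) • (fun x => Kpart ω φ p x (X j) - K x (X j))
              + (cp p j - c j) • (fun x => K x (X j))) := by
        funext x
        rw [Finset.sum_apply]
        simp only [Pi.add_apply, Pi.smul_apply, smul_eq_mul, interpP, interpInf, hcp, hc]
        rw [← Finset.sum_sub_distrib]
        exact Finset.sum_congr rfl fun j _ => by ring
      rw [heq]
      refine (eLpNorm_sum_le (fun j _ => ?_) hq1).trans (Finset.sum_le_sum fun j _ => ?_)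
      · exact ((hmeasD p j).const_smul _).add ((hmeasK j).const_smul _)
      · refine (eLpNorm_add_le ((hmeasD p j).const_smul _) ((hmeasK j).const_smul _) hq1).trans ?_
        have h1 : eLpNorm ((cp p j) • (fun x => Kpart ω φ p x (X j) - K x (X j))) q' μ
            = (‖cp p j‖₊ : ℝ≥0∞)
              * eLpNorm (fun x => K x (X j) - Kpart ω φ p x (X j)) q' μ := by
          rw [eLpNorm_const_smul]
          congr 1
          have : (fun x => Kpart ω φ p x (X j) - K x (X j))
              = -(fun x => K x (X j) - Kpart ω φ p x (X j)) := by funext x; simp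
          rw [this, eLpNorm_neg]
        have h2 : eLpNorm ((cp p j - c j) • (fun x => K x (X j))) q' μ
            = (‖cp p j - c j‖₊ : ℝ≥0∞) * eLpNorm (fun x => K x (X j)) q' μ := by
          rw [eLpNorm_const_smul]
          rfl
        rw [h1, h2]
    have hRHS : Tendsto (fun p => ∑ j : Fin n, ((‖cp p j‖₊ : ℝ≥0∞)
            * eLpNorm (fun x => K x (X j) - Kpart ω φ p x (X j)) q' μ
          + (‖cp p j - c j‖₊ : ℝ≥0∞) * eLpNorm (fun x => K x (X j)) q' μ)) atTop (nhds 0) := by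
      have h0 : (0 : ℝ≥0∞) = ∑ j : Fin n, ((‖c j‖₊ : ℝ≥0∞) * 0
          + (‖c j - c j‖₊ : ℝ≥0∞) * eLpNorm (fun x => K x (X j)) q' μ) := by
        simp
      rw [h0]
      refine tendsto_finset_sum _ fun j _ => Filter.Tendsto.add ?_ ?_
      · refine ENNReal.Tendsto.mul ?_ (Or.inr (by simp)) (hDj j) (Or.inr ENNReal.coe_ne_top)
        exact ENNReal.tendsto_coe.mpr ((hcoefj j).nnnorm)
      · refine ENNReal.Tendsto.mul ?_ (Or.inr (hEj j)) tendsto_const_nhds ?_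
        · have : Tendsto (fun p => cp p j - c j) atTop (nhds (c j - c j)) :=
            (hcoefj j).sub tendsto_const_nhds
          exact ENNReal.tendsto_coe.mpr this.nnnorm
        · exact Or.inr ENNReal.coe_ne_top
    exact tendsto_of_tendsto_of_tendsto_of_le_of_le tendsto_const_nhds hRHS
      (fun p => zero_le) hbound
  have hTop : Tendsto (fun p => eLpNorm
      (fun x => interpP ω φ X y p x - interpInf K X y x) ⊤ μ) atTop (nhds 0) :=
    master ⊤ le_top hLinf hEinf
  have hTwo : Tendsto (fun p => eLpNorm
      (fun x => interpP ω φ X y p x - interpInf K X y x) 2 μ) atTop (nhds 0) :=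
    master 2 (by norm_num) (fun j => (hL2 j).1) hE2
  constructor
  · intro q hq2
    by_cases hqt : q = ⊤
    · rw [hqt]; exact hTop
    · -- interpolation
      have hr2 : (2:ℝ) ≤ q.toReal := by
        have := ENNReal.toReal_mono hqt hq2
        simpa using this
      have hr0 : (0:ℝ) < q.toReal := by linarith
      have hθpos : (0:ℝ) < 2 / q.toReal := by positivity
      have hθle : 2 / q.toReal ≤ 1 := by
        rw [div_le_one hr0]; exact hr2
      have hbound := fun p => eLpNorm_le_interp (hmeasDiff p) hq2 hqt
      have hRHS : Tendsto (fun p =>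
          (eLpNorm (fun x => interpP ω φ X y p x - interpInf K X y x) ⊤ μ) ^ (1 - 2 / q.toReal)
          * (eLpNorm (fun x => interpP ω φ X y p x - interpInf K X y x) 2 μ) ^ (2 / q.toReal))
          atTop (nhds 0) := by
        have hA : Tendsto (fun p =>
            (eLpNorm (fun x => interpP ω φ X y p x - interpInf K X y x) ⊤ μ) ^ (1 - 2 / q.toReal))
            atTop (nhds ((0:ℝ≥0∞) ^ (1 - 2 / q.toReal))) :=
          ((ENNReal.continuous_rpow_const (y := 1 - 2 / q.toReal)).tendsto 0).comp hTop
        have hB : Tendsto (fun p =>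
            (eLpNorm (fun x => interpP ω φ X y p x - interpInf K X y x) 2 μ) ^ (2 / q.toReal))
            atTop (nhds 0) := by
          have := ((ENNReal.continuous_rpow_const (y := 2 / q.toReal)).tendsto 0).comp hTwo
          simpa [ENNReal.zero_rpow_of_pos hθpos, Function.comp_def] using this
        have hAne : (0:ℝ≥0∞) ^ (1 - 2 / q.toReal) ≠ ⊤ := by
          rcases eq_or_lt_of_le hθle with h | h
          · rw [show (1 : ℝ) - 2 / q.toReal = 0 by linarith, ENNReal.rpow_zero]
            exact ENNReal.one_ne_top
          · rw [ENNReal.zero_rpow_of_pos (by linarith)]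
            exact ENNReal.zero_ne_top
        have := ENNReal.Tendsto.mul hA (Or.inr ENNReal.zero_ne_top) hB (Or.inr hAne)
        simpa using this
      exact tendsto_of_tendsto_of_tendsto_of_le_of_le tendsto_const_nhds hRHS
        (fun p => zero_le) hbound
  · intro hμfin q hq1 hq2
    have hbound := fun p => eLpNorm_le_eLpNorm_mul_rpow_measure_univ (le_of_lt hq2)
      (hmeasDiff p)
    have hexp : (0:ℝ) ≤ 1 / q.toReal - 1 / (2:ℝ≥0∞).toReal := by
      have h2 : (2:ℝ≥0∞).toReal = 2 := by norm_num
      rw [h2]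
      have hq0 : (0:ℝ) < q.toReal := by
        apply ENNReal.toReal_pos
        · intro h; rw [h] at hq1; exact absurd hq1 (by norm_num)
        · exact (hq2.trans (by norm_num)).ne
      have hqle : q.toReal ≤ 2 := by
        have := ENNReal.toReal_mono (by norm_num : (2:ℝ≥0∞) ≠ ⊤) hq2.le
        simpa using this
      rw [sub_nonneg]
      exact one_div_le_one_div_of_le hq0 hqle
    have hκ : μ Set.univ ^ (1 / q.toReal - 1 / (2:ℝ≥0∞).toReal) ≠ ⊤ :=
      ENNReal.rpow_ne_top_of_nonneg hexp hμfin.ne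
    have hRHS : Tendsto (fun p =>
        eLpNorm (fun x => interpP ω φ X y p x - interpInf K X y x) 2 μ
          * μ Set.univ ^ (1 / q.toReal - 1 / (2:ℝ≥0∞).toReal)) atTop (nhds 0) := by
      have := ENNReal.Tendsto.mul hTwo (Or.inr hκ)
        (tendsto_const_nhds (x := μ Set.univ ^ (1 / q.toReal - 1 / (2:ℝ≥0∞).toReal)))
        (Or.inr ENNReal.zero_ne_top)
      simpa using this
    exact tendsto_of_tendsto_of_tendsto_of_le_of_le tendsto_const_nhds hRHS
      (fun p => zero_le) hbound
end
end

section
/- Suppose Φ and ω are compatible and every finite subset of Ω is a sampling set for Φ. Then the kernel K = K_{Φ,ω} is strictly positive-definite on Ω: for every finite set of distinct points {x_1,…,x_n} ⊂ Ω and every nonzero c ∈ ℝⁿ, Σ_{j=1}^n Σ_{k=1}^n K(x_j,x_k) c_j c_k > 0. -/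
open MeasureTheory Filter Finset Matrix
open scoped ENNReal BigOperators

noncomputable section

/-- If `Φ` and `ω` are compatible and every finite subset of `Ω` is a sampling
set for `Φ`, then `K = K_{Φ,ω}` is strictly positive-definite on `Ω`. -/
theorem kernel_strictly_positive_definite
    {Ω : Type*} [MetricSpace Ω] [MeasurableSpace Ω] [BorelSpace Ω] (μ : Measure Ω)
    (hμpos : ∀ U : Set Ω, IsOpen U → U.Nonempty → 0 < μ U)
    (Ωm : ℕ → Set Ω) (hΩcpt : ∀ m, IsCompact (Ωm m)) (hΩmono : Monotone Ωm)
    (hΩfin : ∀ m, μ (Ωm m) < ⊤) (hΩunion : (⋃ m, Ωm m) = Set.univ)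
    (φ : ℕ → Ω → ℝ) (hφcont : ∀ k, Continuous (φ k))
    (hortho : ∀ j k, ∫ x, φ j x * φ k x ∂μ = if j = k then 1 else 0)
    (ω : ℕ → ℝ) (hωpos : ∀ k, 0 < ω k) (hωtop : Tendsto ω atTop atTop)
    (K : Ω → Ω → ℝ)
    (hKabs : ∀ x y : Ω, Summable fun k => |(ω k)⁻¹ * φ k x * φ k y|)
    (hKsum : ∀ x y : Ω, HasSum (fun k => (ω k)⁻¹ * φ k x * φ k y) (K x y))
    (hKunif : TendstoUniformly (fun p (z : Ω × Ω) => Kpart ω φ p z.1 z.2)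
      (fun z => K z.1 z.2) atTop)
    (hKbdd : ∃ M : ℝ, ∀ x y : Ω, |K x y| ≤ M)
    (hKcont : Continuous fun z : Ω × Ω => K z.1 z.2)
    (hKL2 : MemLp (fun z : Ω × Ω => K z.1 z.2) 2 (μ.prod μ))
    (hsamp : ∀ (n : ℕ) (x : Fin n → Ω), Function.Injective x →
      ∃ p : ℕ, ∀ y : Fin n → ℝ, ∃ c : ℕ → ℝ, ∀ j, ∑ k ∈ Finset.range p, c k * φ k (x j) = y j) :
    ∀ (n : ℕ) (x : Fin n → Ω), Function.Injective x → ∀ c : Fin n → ℝ, c ≠ 0 →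
      0 < ∑ j, ∑ k, K (x j) (x k) * c j * c k := by
  intro n x hinj c hc
  -- The quadratic form as a sum over the orthonormal system
  have h2 : HasSum (fun m => ∑ j, ∑ k, ((ω m)⁻¹ * φ m (x j) * φ m (x k)) * (c j * c k))
      (∑ j, ∑ k, K (x j) (x k) * (c j * c k)) :=
    hasSum_sum fun j _ => hasSum_sum fun k _ => (hKsum (x j) (x k)).mul_right _
  have hS : HasSum (fun m => (ω m)⁻¹ * (∑ j, c j * φ m (x j)) ^ 2)
      (∑ j, ∑ k, K (x j) (x k) * c j * c k) := by
    have heq : (fun m => (ω m)⁻¹ * (∑ j, c j * φ m (x j)) ^ 2)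
        = fun m => ∑ j, ∑ k, ((ω m)⁻¹ * φ m (x j) * φ m (x k)) * (c j * c k) := by
      funext m
      rw [sq, Finset.sum_mul_sum, Finset.mul_sum]
      refine Finset.sum_congr rfl fun j _ => ?_
      rw [Finset.mul_sum]
      refine Finset.sum_congr rfl fun k _ => ?_
      ring
    rw [heq]
    convert h2 using 2 with j
    refine Finset.sum_congr rfl fun k _ => ?_
    ring
  -- There is some m with nonzero sum
  have hm0 : ∃ m, (∑ j, c j * φ m (x j)) ≠ 0 := by
    by_contra h
    push_neg at h
    obtain ⟨p, hp⟩ := hsamp n x hinj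
    obtain ⟨a, ha⟩ := hp c
    have hz : ∑ j, c j * c j = 0 := by
      calc ∑ j, c j * c j = ∑ j, c j * ∑ k ∈ Finset.range p, a k * φ k (x j) := by
            refine Finset.sum_congr rfl fun j _ => ?_
            rw [ha j]
        _ = ∑ k ∈ Finset.range p, a k * ∑ j, c j * φ k (x j) := by
            simp_rw [Finset.mul_sum]
            rw [Finset.sum_comm]
            refine Finset.sum_congr rfl fun k _ => Finset.sum_congr rfl fun j _ => by ring
        _ = 0 := by simp [h]
    obtain ⟨j, hj⟩ := Function.ne_iff.mp hc
    have hj' : c j ≠ 0 := by simpa using hj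
    have : (0:ℝ) < ∑ j, c j * c j :=
      Finset.sum_pos' (fun i _ => mul_self_nonneg _)
        ⟨j, Finset.mem_univ j, mul_self_pos.mpr hj'⟩
    linarith
  obtain ⟨m0, hm0⟩ := hm0
  have hnonneg : ∀ m, 0 ≤ (ω m)⁻¹ * (∑ j, c j * φ m (x j)) ^ 2 := fun m =>
    mul_nonneg (inv_nonneg.mpr (hωpos m).le) (sq_nonneg _)
  have hpos : 0 < (ω m0)⁻¹ * (∑ j, c j * φ m0 (x j)) ^ 2 :=
    mul_pos (inv_pos.mpr (hωpos m0)) (by positivity)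
  calc (0:ℝ) < ∑' m, (ω m)⁻¹ * (∑ j, c j * φ m (x j)) ^ 2 :=
        Summable.tsum_pos hS.summable hnonneg m0 hpos
    _ = _ := hS.tsum_eq
end
end

section
/- Assume Φ and ω are compatible and X = {x_1,…,x_n} is a sampling set for Φ (so that 𝐊 := (K(x_i,x_j))_{i,j} is invertible). For data y ∈ ℝⁿ, define f_∞(x) := Σ_{k=1}^n K(x,x_k)(𝐊⁻¹ y)_k. Then f_∞ interpolates (X,y), its coefficient sequence c∞ (where f_∞ = Σ_k (c∞)_k φ_k) satisfies Σ_k ω_k (c∞)_k² < ∞, and f_∞ has minimum weighted norm: for every real sequence c with Σ_k ω_k c_k² < ∞ such that the function g(x) := Σ_k c_k φ_k(x) (the series converges absolutely at every x ∈ Ω) satisfies g(x_j) = y_j for all j, one has Σ_k ω_k (c∞)_k² ≤ Σ_k ω_k c_k². -/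
open MeasureTheory Filter Finset Matrix
open scoped ENNReal BigOperators

noncomputable section

/-- Coefficient sequence of `f_∞`: `(c∞)_k = ω_k⁻¹ ∑_j φ_k(x_j) (𝐊⁻¹ y)_j`. -/
def coefInf {Ω : Type*} (K : Ω → Ω → ℝ) (ω : ℕ → ℝ) (φ : ℕ → Ω → ℝ) {n : ℕ}
    (X : Fin n → Ω) (y : Fin n → ℝ) (k : ℕ) : ℝ :=
  (ω k)⁻¹ * ∑ j, φ k (X j) * ((KMat K X)⁻¹ *ᵥ y) j

lemma aux_hasSum_sum {Ω : Type*} (ω : ℕ → ℝ) (φ : ℕ → Ω → ℝ) (K : Ω → Ω → ℝ) {n : ℕ}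
    (X : Fin n → Ω)
    (hKsum : ∀ x y : Ω, HasSum (fun k => (ω k)⁻¹ * φ k x * φ k y) (K x y))
    (x : Ω) (v : Fin n → ℝ) :
    HasSum (fun k => (ω k)⁻¹ * φ k x * (∑ j, φ k (X j) * v j)) (∑ j, K x (X j) * v j) := by
  have h : ∀ k, (ω k)⁻¹ * φ k x * (∑ j, φ k (X j) * v j)
      = ∑ j, ((ω k)⁻¹ * φ k x * φ k (X j)) * v j := by
    intro k; rw [Finset.mul_sum]; exact Finset.sum_congr rfl (fun j _ => by ring)
  simpa only [h] using hasSum_sum (fun j (_ : j ∈ Finset.univ) => (hKsum x (X j)).mul_right (v j))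

lemma aux_hasSum_quad {Ω : Type*} (ω : ℕ → ℝ) (φ : ℕ → Ω → ℝ) (K : Ω → Ω → ℝ) {n : ℕ}
    (X : Fin n → Ω)
    (hKsum : ∀ x y : Ω, HasSum (fun k => (ω k)⁻¹ * φ k x * φ k y) (K x y))
    (v w : Fin n → ℝ) :
    HasSum (fun k => (ω k)⁻¹ * (∑ j, φ k (X j) * v j) * (∑ j, φ k (X j) * w j))
      (∑ i, v i * ∑ j, K (X i) (X j) * w j) := by
  have h : ∀ k, (ω k)⁻¹ * (∑ j, φ k (X j) * v j) * (∑ j, φ k (X j) * w j)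
      = ∑ i, v i * ((ω k)⁻¹ * φ k (X i) * (∑ j, φ k (X j) * w j)) := by
    intro k
    rw [mul_comm ((ω k)⁻¹), mul_assoc, Finset.sum_mul]
    exact Finset.sum_congr rfl (fun i _ => by ring)
  simpa only [h] using hasSum_sum
    (fun i (_ : i ∈ Finset.univ) => (aux_hasSum_sum ω φ K X hKsum (X i) w).mul_left (v i))

/-- The limiting interpolant `f_∞` interpolates `(X,y)`, its coefficient
sequence `c∞` has finite weighted norm `∑ ω_k (c∞)_k² < ∞`, and it has minimum weighted norm
among all interpolants with absolutely convergent expansions of finite weighted norm. -/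
theorem interpInf_is_min_weighted_norm_interpolant
    {Ω : Type*} [MetricSpace Ω] [MeasurableSpace Ω] [BorelSpace Ω] (μ : Measure Ω)
    (hμpos : ∀ U : Set Ω, IsOpen U → U.Nonempty → 0 < μ U)
    (Ωm : ℕ → Set Ω) (hΩcpt : ∀ m, IsCompact (Ωm m)) (hΩmono : Monotone Ωm)
    (hΩfin : ∀ m, μ (Ωm m) < ⊤) (hΩunion : (⋃ m, Ωm m) = Set.univ)
    (φ : ℕ → Ω → ℝ) (hφcont : ∀ k, Continuous (φ k))
    (hortho : ∀ j k, ∫ x, φ j x * φ k x ∂μ = if j = k then 1 else 0)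
    (ω : ℕ → ℝ) (hωpos : ∀ k, 0 < ω k) (hωtop : Tendsto ω atTop atTop)
    (K : Ω → Ω → ℝ)
    (hKabs : ∀ x y : Ω, Summable fun k => |(ω k)⁻¹ * φ k x * φ k y|)
    (hKsum : ∀ x y : Ω, HasSum (fun k => (ω k)⁻¹ * φ k x * φ k y) (K x y))
    (hKunif : TendstoUniformly (fun p (z : Ω × Ω) => Kpart ω φ p z.1 z.2)
      (fun z => K z.1 z.2) atTop)
    (hKbdd : ∃ M : ℝ, ∀ x y : Ω, |K x y| ≤ M)
    (hKcont : Continuous fun z : Ω × Ω => K z.1 z.2)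
    (hKL2 : MemLp (fun z : Ω × Ω => K z.1 z.2) 2 (μ.prod μ))
    {n : ℕ} (X : Fin n → Ω) (hXinj : Function.Injective X)
    (pX : ℕ)
    (hpX : ∀ y : Fin n → ℝ, ∃ c : ℕ → ℝ, ∀ j, ∑ k ∈ Finset.range pX, c k * φ k (X j) = y j)
    (y : Fin n → ℝ) :
    (∀ j, interpInf K X y (X j) = y j) ∧
    (∀ x : Ω, HasSum (fun k => coefInf K ω φ X y k * φ k x) (interpInf K X y x)) ∧
    Summable (fun k => ω k * (coefInf K ω φ X y k) ^ 2) ∧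
    (∀ c : ℕ → ℝ, Summable (fun k => ω k * (c k) ^ 2) →
      (∀ x : Ω, Summable fun k => |c k * φ k x|) →
      (∀ j, ∑' k, c k * φ k (X j) = y j) →
      ∑' k, ω k * (coefInf K ω φ X y k) ^ 2 ≤ ∑' k, ω k * (c k) ^ 2) := by
  -- The matrix 𝐊 is invertible.
  have hdet : (KMat K X).det ≠ 0 := by
    intro h0
    obtain ⟨v, hv, hAv⟩ := (Matrix.exists_mulVec_eq_zero_iff).mpr h0
    have hrow : ∀ i, ∑ j, K (X i) (X j) * v j = 0 := by
      intro i
      have := congrFun hAv i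
      simpa [Matrix.mulVec, dotProduct, KMat] using this
    have hq := aux_hasSum_quad ω φ K X hKsum v v
    rw [show (∑ i, v i * ∑ j, K (X i) (X j) * v j) = 0 by simp [hrow]] at hq
    have hnonneg : ∀ k, 0 ≤ (ω k)⁻¹ * (∑ j, φ k (X j) * v j) * (∑ j, φ k (X j) * v j) := by
      intro k
      rw [mul_assoc]
      exact mul_nonneg (inv_nonneg.mpr (hωpos k).le) (mul_self_nonneg _)
    have hS : ∀ k, ∑ j, φ k (X j) * v j = 0 := by
      intro k
      have hle : (ω k)⁻¹ * (∑ j, φ k (X j) * v j) * (∑ j, φ k (X j) * v j) ≤ 0 :=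
        le_hasSum hq k (fun j _ => hnonneg j)
      have heq0 : (ω k)⁻¹ * (∑ j, φ k (X j) * v j) * (∑ j, φ k (X j) * v j) = 0 :=
        le_antisymm hle (hnonneg k)
      rcases mul_eq_zero.mp heq0 with h | h
      · rcases mul_eq_zero.mp h with h' | h'
        · exact absurd h' (inv_ne_zero (hωpos k).ne')
        · exact h'
      · exact h
    obtain ⟨c, hc⟩ := hpX v
    have hvv : ∑ j, v j * v j = 0 := by
      calc ∑ j, v j * v j = ∑ j, (∑ k ∈ Finset.range pX, c k * φ k (X j)) * v j := by
            exact Finset.sum_congr rfl (fun j _ => by rw [hc j])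
        _ = ∑ j, ∑ k ∈ Finset.range pX, (c k * φ k (X j)) * v j := by
            simp only [Finset.sum_mul]
        _ = ∑ k ∈ Finset.range pX, ∑ j, (c k * φ k (X j)) * v j := Finset.sum_comm
        _ = ∑ k ∈ Finset.range pX, c k * ∑ j, φ k (X j) * v j := by
            refine Finset.sum_congr rfl (fun k _ => ?_)
            rw [Finset.mul_sum]
            exact Finset.sum_congr rfl (fun j _ => by ring)
        _ = 0 := by simp [hS]
    apply hv
    funext j
    have := (Finset.sum_eq_zero_iff_of_nonneg
      (fun i (_ : i ∈ Finset.univ) => mul_self_nonneg (v i))).mp hvv j (Finset.mem_univ j)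
    exact mul_self_eq_zero.mp this
  have hInv : KMat K X * (KMat K X)⁻¹ = 1 := Matrix.mul_nonsing_inv _ (Ne.isUnit hdet)
  set a : Fin n → ℝ := (KMat K X)⁻¹ *ᵥ y with ha
  have hKa : ∀ i, ∑ j, K (X i) (X j) * a j = y i := by
    intro i
    have h1 : KMat K X *ᵥ a = y := by
      rw [ha, Matrix.mulVec_mulVec, hInv, Matrix.one_mulVec]
    have := congrFun h1 i
    simpa [Matrix.mulVec, dotProduct, KMat] using this
  -- Claim 1: interpolation
  have claim1 : ∀ j, interpInf K X y (X j) = y j := by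
    intro j
    rw [interpInf, ← ha]
    exact hKa j
  -- Claim 2: expansion
  have claim2 : ∀ x : Ω, HasSum (fun k => coefInf K ω φ X y k * φ k x) (interpInf K X y x) := by
    intro x
    have h := aux_hasSum_sum ω φ K X hKsum x a
    have heq : (fun k => coefInf K ω φ X y k * φ k x)
        = fun k => (ω k)⁻¹ * φ k x * (∑ j, φ k (X j) * a j) := by
      funext k; rw [coefInf, ← ha]; ring
    rw [heq, interpInf, ← ha]
    exact h
  -- Quadratic form HasSum for c∞
  have hquad := aux_hasSum_quad ω φ K X hKsum a a
  have hAval : (∑ i, a i * ∑ j, K (X i) (X j) * a j) = ∑ j, a j * y j := by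
    exact Finset.sum_congr rfl (fun i _ => by rw [hKa i])
  rw [hAval] at hquad
  have h3 : HasSum (fun k => ω k * (coefInf K ω φ X y k) ^ 2) (∑ j, a j * y j) := by
    have heq : (fun k => ω k * (coefInf K ω φ X y k) ^ 2)
        = fun k => (ω k)⁻¹ * (∑ j, φ k (X j) * a j) * (∑ j, φ k (X j) * a j) := by
      funext k
      rw [coefInf, ← ha]
      have hk : ω k ≠ 0 := (hωpos k).ne'
      field_simp
    rw [heq]
    exact hquad
  refine ⟨claim1, claim2, h3.summable, ?_⟩
  -- Claim 4: minimality
  intro c hsc habs hint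
  have hg : ∀ j, HasSum (fun k => c k * φ k (X j)) (y j) := by
    intro j
    have hsum : Summable fun k => c k * φ k (X j) := (habs (X j)).of_abs
    have := hsum.hasSum
    rwa [hint j] at this
  -- B = ∑' ω c∞ c = ∑ a j * y j
  have hB : HasSum (fun k => ω k * coefInf K ω φ X y k * c k) (∑ j, a j * y j) := by
    have h := hasSum_sum (fun j (_ : j ∈ Finset.univ) => (hg j).mul_right (a j))
    have heq : (fun k => ω k * coefInf K ω φ X y k * c k)
        = fun k => ∑ j, (c k * φ k (X j)) * a j := by
      funext k
      rw [coefInf, ← ha]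
      have hk : ω k ≠ 0 := (hωpos k).ne'
      rw [show ω k * ((ω k)⁻¹ * ∑ j, φ k (X j) * a j) * c k
          = (ω k * (ω k)⁻¹) * ((∑ j, φ k (X j) * a j) * c k) by ring,
        mul_inv_cancel₀ hk, one_mul, Finset.sum_mul]
      exact Finset.sum_congr rfl (fun j _ => by ring)
    rw [heq, show (∑ j, a j * y j) = ∑ j, y j * a j from
      Finset.sum_congr rfl (fun j _ => mul_comm _ _)]
    exact h
  -- d = c - c∞ ; expand
  have hd2 : Summable (fun k => ω k * (c k - coefInf K ω φ X y k) ^ 2) := by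
    have heq : (fun k => ω k * (c k - coefInf K ω φ X y k) ^ 2)
        = fun k => (ω k * c k ^ 2 + ω k * (coefInf K ω φ X y k) ^ 2)
            - 2 * (ω k * coefInf K ω φ X y k * c k) := by
      funext k; ring
    rw [heq]
    exact (hsc.add h3.summable).sub (hB.summable.mul_left 2)
  have hid : (fun k => ω k * c k ^ 2)
      = fun k => ω k * (c k - coefInf K ω φ X y k) ^ 2
          + (2 * (ω k * coefInf K ω φ X y k * c k) - ω k * (coefInf K ω φ X y k) ^ 2) := by
    funext k; ring
  have hsum2 : Summable (fun k => 2 * (ω k * coefInf K ω φ X y k * c k)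
      - ω k * (coefInf K ω φ X y k) ^ 2) := (hB.summable.mul_left 2).sub h3.summable
  have htsum : ∑' k, ω k * c k ^ 2
      = (∑' k, ω k * (c k - coefInf K ω φ X y k) ^ 2)
        + (2 * (∑ j, a j * y j) - ∑ j, a j * y j) := by
    rw [hid, Summable.tsum_add hd2 hsum2]
    congr 1
    rw [Summable.tsum_sub (hB.summable.mul_left 2) h3.summable, (hB.mul_left 2).tsum_eq, h3.tsum_eq]
  rw [h3.tsum_eq, htsum]
  have hnn : 0 ≤ ∑' k, ω k * (c k - coefInf K ω φ X y k) ^ 2 :=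
    tsum_nonneg (fun k => mul_nonneg (hωpos k).le (sq_nonneg _))
  linarith
end
end

section
/- Assume Φ and ω are compatible and X = {x_1,…,x_n} is a sampling set for Φ. Let f be a function of the form f(x) = Σ_k c_k φ_k(x) (the series converging absolutely at every point) with Σ_k ω_k c_k² < ∞. Then for every ε > 0 there exist a finite p and a function g ∈ span{φ_1,…,φ_p} such that g(x_j) = f(x_j) for all j = 1,…,n and ‖f − g‖_{L²_μ(Ω)} ≤ inf{ ‖f − h‖_{L²_μ(Ω)} : h ∈ span{φ_1,…,φ_p} } + ε. -/
open MeasureTheory Filter Finset Matrix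
open scoped ENNReal BigOperators

noncomputable section

section Aux

variable {Ω : Type*} [MeasurableSpace Ω] {μ : Measure Ω}

/-- key pointwise identity for squared enorms of real functions. -/
lemma enn_sq (r : ℝ) : (‖r‖₊ : ℝ≥0∞) ^ (2 : ℝ) = ENNReal.ofReal (r ^ 2) := by
  rw [← enorm_eq_nnnorm, ← ofReal_norm, ENNReal.ofReal_rpow_of_nonneg (norm_nonneg r) (by norm_num)]
  congr 1
  rw [Real.norm_eq_abs]
  rw [show (2 : ℝ) = ((2 : ℕ) : ℝ) by norm_num, Real.rpow_natCast, sq_abs]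

lemma elp_two (g : Ω → ℝ) :
    eLpNorm g 2 μ = (∫⁻ x, ENNReal.ofReal (g x ^ 2) ∂μ) ^ ((1 : ℝ) / 2) := by
  rw [eLpNorm_eq_lintegral_rpow_enorm_toReal two_ne_zero ENNReal.ofNat_ne_top]
  rw [show (2 : ℝ≥0∞).toReal = (2 : ℝ) from by norm_num]
  rw [lintegral_congr (f := fun x => ‖g x‖ₑ ^ (2 : ℝ)) fun x => enn_sq (g x)]

/-- Square expansion of a finite sum. -/
lemma sum_sq_expand (φ : ℕ → Ω → ℝ) (a : ℕ → ℝ) (s : Finset ℕ) (x : Ω) :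
    (∑ k ∈ s, a k * φ k x) ^ 2 = ∑ j ∈ s, ∑ k ∈ s, (a j * a k) * (φ j x * φ k x) := by
  rw [sq, Finset.sum_mul_sum]
  exact Finset.sum_congr rfl fun j _ => Finset.sum_congr rfl fun k _ => by ring

lemma sq_sum_integrable (φ : ℕ → Ω → ℝ)
    (hmul : ∀ j k, Integrable (fun x => φ j x * φ k x) μ) (a : ℕ → ℝ) (s : Finset ℕ) :
    Integrable (fun x => (∑ k ∈ s, a k * φ k x) ^ 2) μ := by
  have : (fun x => (∑ k ∈ s, a k * φ k x) ^ 2)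
      = fun x => ∑ j ∈ s, ∑ k ∈ s, (a j * a k) * (φ j x * φ k x) :=
    funext fun x => sum_sq_expand φ a s x
  rw [this]
  exact integrable_finset_sum s fun j _ =>
    integrable_finset_sum s fun k _ => (hmul j k).const_mul _

lemma sq_sum_integral (φ : ℕ → Ω → ℝ)
    (hortho : ∀ j k, ∫ x, φ j x * φ k x ∂μ = if j = k then 1 else 0)
    (hmul : ∀ j k, Integrable (fun x => φ j x * φ k x) μ) (a : ℕ → ℝ) (s : Finset ℕ) :
    ∫ x, (∑ k ∈ s, a k * φ k x) ^ 2 ∂μ = ∑ k ∈ s, a k ^ 2 := by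
  have h1 : (fun x => (∑ k ∈ s, a k * φ k x) ^ 2)
      = fun x => ∑ j ∈ s, ∑ k ∈ s, (a j * a k) * (φ j x * φ k x) :=
    funext fun x => sum_sq_expand φ a s x
  rw [h1, integral_finset_sum s (fun j _ =>
    integrable_finset_sum s fun k _ => (hmul j k).const_mul _)]
  have h2 : ∀ j ∈ s, ∫ x, ∑ k ∈ s, (a j * a k) * (φ j x * φ k x) ∂μ
      = ∑ k ∈ s, (a j * a k) * (if j = k then 1 else 0) := by
    intro j _
    rw [integral_finset_sum s (fun k _ => (hmul j k).const_mul _)]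
    exact Finset.sum_congr rfl fun k _ => by rw [integral_const_mul, hortho]
  rw [Finset.sum_congr rfl h2]
  refine Finset.sum_congr rfl fun j hj => ?_
  simp only [mul_ite, mul_one, mul_zero]
  rw [Finset.sum_ite_eq s j (fun k => a j * a k), if_pos hj, ← sq]

end Aux

set_option maxHeartbeats 2000000 in
/-- For `f` in the RKHS (coefficients `c` with `∑ ω_k c_k² < ∞`, absolutely
convergent expansion), for every `ε > 0` there exist a finite `p` and `g ∈ span{φ_1,…,φ_p}`
interpolating `f` on `X` with `‖f − g‖_{L²} ≤ inf_{h ∈ span{φ_1,…,φ_p}} ‖f − h‖_{L²} + ε`. -/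
theorem rkhs_near_optimal_interpolant_exists
    {Ω : Type*} [MetricSpace Ω] [MeasurableSpace Ω] [BorelSpace Ω] (μ : Measure Ω)
    (hμpos : ∀ U : Set Ω, IsOpen U → U.Nonempty → 0 < μ U)
    (Ωm : ℕ → Set Ω) (hΩcpt : ∀ m, IsCompact (Ωm m)) (hΩmono : Monotone Ωm)
    (hΩfin : ∀ m, μ (Ωm m) < ⊤) (hΩunion : (⋃ m, Ωm m) = Set.univ)
    (φ : ℕ → Ω → ℝ) (hφcont : ∀ k, Continuous (φ k))
    (hortho : ∀ j k, ∫ x, φ j x * φ k x ∂μ = if j = k then 1 else 0)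
    (ω : ℕ → ℝ) (hωpos : ∀ k, 0 < ω k) (hωtop : Tendsto ω atTop atTop)
    (K : Ω → Ω → ℝ)
    (hKabs : ∀ x y : Ω, Summable fun k => |(ω k)⁻¹ * φ k x * φ k y|)
    (hKsum : ∀ x y : Ω, HasSum (fun k => (ω k)⁻¹ * φ k x * φ k y) (K x y))
    (hKunif : TendstoUniformly (fun p (z : Ω × Ω) => Kpart ω φ p z.1 z.2)
      (fun z => K z.1 z.2) atTop)
    (hKbdd : ∃ M : ℝ, ∀ x y : Ω, |K x y| ≤ M)
    (hKcont : Continuous fun z : Ω × Ω => K z.1 z.2)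
    (hKL2 : MemLp (fun z : Ω × Ω => K z.1 z.2) 2 (μ.prod μ))
    {n : ℕ} (X : Fin n → Ω) (hXinj : Function.Injective X)
    (pX : ℕ)
    (hpX : ∀ y : Fin n → ℝ, ∃ c : ℕ → ℝ, ∀ j, ∑ k ∈ Finset.range pX, c k * φ k (X j) = y j)
    (c : ℕ → ℝ) (hcw : Summable fun k => ω k * (c k) ^ 2)
    (hcabs : ∀ x : Ω, Summable fun k => |c k * φ k x|) :
    ∀ ε : ℝ, 0 < ε → ∃ (p : ℕ) (b : Fin p → ℝ),
      (∀ j, ∑ k, b k * φ (k : ℕ) (X j) = ∑' k, c k * φ k (X j)) ∧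
      eLpNorm (fun x => (∑' k, c k * φ k x) - ∑ k : Fin p, b k * φ (k : ℕ) x) 2 μ ≤
        (⨅ b' : Fin p → ℝ,
          eLpNorm (fun x => (∑' k, c k * φ k x) - ∑ k : Fin p, b' k * φ (k : ℕ) x) 2 μ) +
        ENNReal.ofReal ε := by
  intro ε hε
  set F : Ω → ℝ := fun x => ∑' k, c k * φ k x with hFdef
  have hsumm : ∀ x, Summable fun k => c k * φ k x := fun x => (hcabs x).of_abs
  have hφm : ∀ k, Measurable (φ k) := fun k => (hφcont k).measurable
  have hSmeas : ∀ M, Measurable (fun x => ∑ k ∈ Finset.range M, c k * φ k x) := fun M =>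
    Finset.measurable_sum _ fun k _ => (measurable_const.mul (hφm k))
  have hFmeas : Measurable F := by
    refine measurable_of_tendsto_metrizable hSmeas (tendsto_pi_nhds.2 fun x => ?_)
    exact (hsumm x).hasSum.tendsto_sum_nat
  -- square integrability of φ k and of products
  have hsq_int : ∀ k, Integrable (fun x => φ k x * φ k x) μ := by
    intro k
    by_contra h
    have h0 := integral_undef h
    rw [hortho k k] at h0
    simp at h0
  have hmul : ∀ j k, Integrable (fun x => φ j x * φ k x) μ := by
    intro j k
    refine Integrable.mono' ((hsq_int j).add (hsq_int k))
      ((hφm j).mul (hφm k)).aestronglyMeasurable (Eventually.of_forall fun x => ?_)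
    simp only [Pi.add_apply]
    rw [Real.norm_eq_abs, abs_mul]
    nlinarith [sq_nonneg (|φ j x| - |φ k x|), sq_abs (φ j x), sq_abs (φ k x),
      abs_nonneg (φ j x), abs_nonneg (φ k x)]
  -- eLpNorm of each φ k is 1
  have hφnorm : ∀ k, eLpNorm (φ k) 2 μ = 1 := by
    intro k
    rw [elp_two]
    have : ∫⁻ x, ENNReal.ofReal (φ k x ^ 2) ∂μ = 1 := by
      rw [← ofReal_integral_eq_lintegral_ofReal (by simpa [sq] using hsq_int k)
        (Eventually.of_forall fun x => sq_nonneg _)]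
      have : ∫ x, φ k x ^ 2 ∂μ = 1 := by simpa [sq] using hortho k k
      rw [this, ENNReal.ofReal_one]
    rw [this, ENNReal.one_rpow]
  -- summability of c²
  have hc2 : Summable fun k => c k ^ 2 := by
    obtain ⟨N0, hN0⟩ := (hωtop.eventually_ge_atTop 1).exists_forall_of_atTop
    refine (summable_nat_add_iff N0).1 ?_
    refine Summable.of_nonneg_of_le (fun k => sq_nonneg _) (fun k => ?_)
      ((summable_nat_add_iff N0).2 hcw)
    have h1 : (1 : ℝ) ≤ ω (k + N0) := hN0 (k + N0) (Nat.le_add_left _ _)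
    nlinarith [sq_nonneg (c (k + N0))]
  have ht0 : Tendsto (fun N => ∑' k, c (k + N) ^ 2) atTop (nhds 0) :=
    tendsto_sum_nat_add (fun k => c k ^ 2)
  -- tails at sample points
  have hu0 : ∀ j : Fin n,
      Tendsto (fun N => ∑' k, |c (k + N) * φ (k + N) (X j)|) atTop (nhds 0) :=
    fun j => tendsto_sum_nat_add (fun k => |c k * φ k (X j)|)
  have hyvle : ∀ (N : ℕ) (j : Fin n),
      |F (X j) - ∑ k ∈ Finset.range N, c k * φ k (X j)|
        ≤ ∑' k, |c (k + N) * φ (k + N) (X j)| := by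
    intro N j
    have h1 := Summable.sum_add_tsum_nat_add (f := fun k => c k * φ k (X j)) N (hsumm (X j))
    have h2 : F (X j) - ∑ k ∈ Finset.range N, c k * φ k (X j)
        = ∑' k, c (k + N) * φ (k + N) (X j) := by
      rw [hFdef]
      simp only
      linarith [h1]
    rw [h2]
    have hs : Summable fun k => |c (k + N) * φ (k + N) (X j)| :=
      (summable_nat_add_iff N).2 (hcabs (X j))
    simpa only [Real.norm_eq_abs] using
      norm_tsum_le_tsum_norm (f := fun k => c (k + N) * φ (k + N) (X j))
        (by simpa only [Real.norm_eq_abs] using hs)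
  -- correction solution vectors
  set e : Fin n → ℕ → ℝ := fun i => Classical.choose (hpX (Pi.single i 1)) with hedef
  have he : ∀ (i : Fin n) (j : Fin n),
      ∑ k ∈ Finset.range pX, e i k * φ k (X j) = (Pi.single i 1 : Fin n → ℝ) j := by
    intro i
    simpa only [hedef] using Classical.choose_spec (hpX (Pi.single i 1))
  set A : Fin n → ℝ := fun i => ∑ k ∈ Finset.range pX, |e i k| with hAdef
  set yv : ℕ → Fin n → ℝ :=
    fun N j => F (X j) - ∑ k ∈ Finset.range N, c k * φ k (X j) with hyvdef
  set d : ℕ → ℕ → ℝ := fun N k => ∑ i, yv N i * e i k with hddef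
  have hdinterp : ∀ (N : ℕ) (j : Fin n),
      ∑ k ∈ Finset.range pX, d N k * φ k (X j) = yv N j := by
    intro N j
    have h1 : ∀ k, d N k * φ k (X j) = ∑ i, yv N i * (e i k * φ k (X j)) := by
      intro k
      rw [hddef]
      simp only
      rw [Finset.sum_mul]
      exact Finset.sum_congr rfl fun i _ => by ring
    simp_rw [h1]
    rw [Finset.sum_comm]
    have h2 : ∀ i : Fin n, ∑ k ∈ Finset.range pX, yv N i * (e i k * φ k (X j))
        = yv N i * (Pi.single i 1 : Fin n → ℝ) j := by
      intro i
      rw [← Finset.mul_sum, he]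
    simp_rw [h2]
    simp [Pi.single_apply]
  have hdbound : ∀ N : ℕ, ∑ k ∈ Finset.range pX, |d N k|
      ≤ ∑ i, (∑' k, |c (k + N) * φ (k + N) (X i)|) * A i := by
    intro N
    have h1 : ∑ k ∈ Finset.range pX, |d N k|
        ≤ ∑ k ∈ Finset.range pX, ∑ i, |yv N i| * |e i k| := by
      refine Finset.sum_le_sum fun k _ => ?_
      rw [hddef]
      simp only
      refine le_trans (Finset.abs_sum_le_sum_abs _ _) ?_
      exact Finset.sum_le_sum fun i _ => le_of_eq (abs_mul _ _)
    refine le_trans h1 ?_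
    rw [Finset.sum_comm]
    refine Finset.sum_le_sum fun i _ => ?_
    rw [← Finset.mul_sum]
    exact mul_le_mul_of_nonneg_right (hyvle N i)
      (Finset.sum_nonneg fun k _ => abs_nonneg _)
  have hBtend : Tendsto (fun N => ∑ i, (∑' k, |c (k + N) * φ (k + N) (X i)|) * A i)
      atTop (nhds 0) := by
    have := tendsto_finset_sum (Finset.univ : Finset (Fin n))
      (fun i _ => (hu0 i).mul_const (A i))
    simpa using this
  -- choose N
  have hev1 : ∀ᶠ N in atTop, ∑' k, c (k + N) ^ 2 ≤ (ε / 2) ^ 2 :=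
    (ht0.eventually_lt_const (by positivity)).mono fun N h => le_of_lt h
  have hev2 : ∀ᶠ N in atTop,
      ∑ i, (∑' k, |c (k + N) * φ (k + N) (X i)|) * A i ≤ ε / 2 :=
    (hBtend.eventually_lt_const (by positivity)).mono fun N h => le_of_lt h
  obtain ⟨N, ⟨h1, h2⟩, h3⟩ := ((hev1.and hev2).and (eventually_ge_atTop pX)).exists
  -- the candidate
  set dd : ℕ → ℝ := fun k => if k < pX then d N k else 0 with hdddef
  refine ⟨N, fun k : Fin N => c (k : ℕ) + dd (k : ℕ), ?_, ?_⟩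
  · -- interpolation
    intro j
    rw [Fin.sum_univ_eq_sum_range (fun k => (c k + dd k) * φ k (X j)) N]
    have hsplit : ∑ k ∈ Finset.range N, (c k + dd k) * φ k (X j)
        = ∑ k ∈ Finset.range N, c k * φ k (X j)
          + ∑ k ∈ Finset.range pX, d N k * φ k (X j) := by
      simp_rw [add_mul]
      rw [Finset.sum_add_distrib]
      congr 1
      rw [← Finset.sum_subset (Finset.range_subset_range.2 h3)
        (fun k _ hk => by simp [hdddef, Finset.mem_range.not.1 hk])]
      exact Finset.sum_congr rfl fun k hk => by
        simp [hdddef, Finset.mem_range.1 hk]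
    rw [hsplit, hdinterp N j, hyvdef]
    simp [hFdef]
  · -- the L² bound
    set SN : Ω → ℝ := fun x => ∑ k ∈ Finset.range N, c k * φ k x with hSNdef
    set h : Ω → ℝ := fun x => ∑ k ∈ Finset.range pX, d N k * φ k x with hhdef
    have hGeq : (fun x => F x - ∑ k : Fin N, (c (k : ℕ) + dd (k : ℕ)) * φ (k : ℕ) x)
        = (fun x => F x - SN x) + fun x => -(h x) := by
      funext x
      simp only [Pi.add_apply]
      rw [Fin.sum_univ_eq_sum_range (fun k => (c k + dd k) * φ k x) N]
      have hsplit : ∑ k ∈ Finset.range N, (c k + dd k) * φ k x = SN x + h x := by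
        simp_rw [add_mul]
        rw [Finset.sum_add_distrib]
        congr 1
        rw [← Finset.sum_subset (Finset.range_subset_range.2 h3)
          (fun k _ hk => by simp [hdddef, Finset.mem_range.not.1 hk])]
        exact Finset.sum_congr rfl fun k hk => by
          simp [hdddef, Finset.mem_range.1 hk]
      rw [hsplit]
      ring
    rw [hGeq]
    have hSNm : Measurable SN := hSmeas N
    have hhcont : Continuous h :=
      continuous_finset_sum _ fun k _ => (continuous_const.mul (hφcont k))
    have hstep := eLpNorm_add_le (μ := μ) (p := 2)
      ((hFmeas.sub hSNm).aestronglyMeasurable)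
      ((hhcont.neg).aestronglyMeasurable) one_le_two
    refine le_trans hstep ?_
    -- bound 1 : tail
    have e1 : eLpNorm (fun x => F x - SN x) 2 μ ≤ ENNReal.ofReal (ε / 2) := by
      have hTle : ∫⁻ x, ENNReal.ofReal ((F x - SN x) ^ 2) ∂μ
          ≤ ENNReal.ofReal (∑' k, c (k + N) ^ 2) := by
        have hmeasM : ∀ M : ℕ, Measurable fun x =>
            ENNReal.ofReal ((∑ k ∈ Finset.range M, c k * φ k x - SN x) ^ 2) := by
          intro M
          exact ENNReal.measurable_ofReal.comp (((hSmeas M).sub hSNm).pow_const 2)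
        have hpt : ∀ x, ENNReal.ofReal ((F x - SN x) ^ 2)
            = liminf (fun M => ENNReal.ofReal
              ((∑ k ∈ Finset.range M, c k * φ k x - SN x) ^ 2)) atTop := by
          intro x
          have htd : Tendsto (fun M => ENNReal.ofReal
              ((∑ k ∈ Finset.range M, c k * φ k x - SN x) ^ 2)) atTop
              (nhds (ENNReal.ofReal ((F x - SN x) ^ 2))) := by
            refine (ENNReal.continuous_ofReal.tendsto _).comp ?_
            exact ((hsumm x).hasSum.tendsto_sum_nat.sub tendsto_const_nhds).pow 2
          exact htd.liminf_eq.symm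
        calc ∫⁻ x, ENNReal.ofReal ((F x - SN x) ^ 2) ∂μ
            = ∫⁻ x, liminf (fun M => ENNReal.ofReal
              ((∑ k ∈ Finset.range M, c k * φ k x - SN x) ^ 2)) atTop ∂μ :=
              lintegral_congr fun x => hpt x
          _ ≤ liminf (fun M => ∫⁻ x, ENNReal.ofReal
              ((∑ k ∈ Finset.range M, c k * φ k x - SN x) ^ 2) ∂μ) atTop :=
              lintegral_liminf_le hmeasM
          _ ≤ ENNReal.ofReal (∑' k, c (k + N) ^ 2) := by
              refine liminf_le_of_frequently_le' (Eventually.frequently ?_)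
              rw [eventually_atTop]
              refine ⟨N, fun M hM => ?_⟩
              have hdiff : ∀ x, ∑ k ∈ Finset.range M, c k * φ k x - SN x
                  = ∑ k ∈ Finset.Ico N M, c k * φ k x := by
                intro x
                rw [Finset.sum_Ico_eq_sub _ hM, hSNdef]
              have hint : Integrable (fun x =>
                  (∑ k ∈ Finset.Ico N M, c k * φ k x) ^ 2) μ :=
                sq_sum_integrable φ hmul c _
              calc ∫⁻ x, ENNReal.ofReal
                    ((∑ k ∈ Finset.range M, c k * φ k x - SN x) ^ 2) ∂μ
                  = ∫⁻ x, ENNReal.ofReal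
                    ((∑ k ∈ Finset.Ico N M, c k * φ k x) ^ 2) ∂μ := by
                    exact lintegral_congr fun x => by rw [hdiff x]
                _ = ENNReal.ofReal (∫ x, (∑ k ∈ Finset.Ico N M, c k * φ k x) ^ 2 ∂μ) :=
                    (ofReal_integral_eq_lintegral_ofReal hint
                      (Eventually.of_forall fun x => sq_nonneg _)).symm
                _ ≤ ENNReal.ofReal (∑' k, c (k + N) ^ 2) := by
                    refine ENNReal.ofReal_le_ofReal ?_
                    rw [sq_sum_integral φ hortho hmul c _]
                    rw [Finset.sum_Ico_eq_sum_range]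
                    have hsN : Summable fun k => c (k + N) ^ 2 :=
                      (summable_nat_add_iff N).2 hc2
                    refine le_trans (le_of_eq ?_)
                      (Summable.sum_le_tsum (Finset.range (M - N))
                        (fun k _ => sq_nonneg _) hsN)
                    exact Finset.sum_congr rfl fun k _ => by rw [add_comm]
      rw [elp_two]
      have hfin : (∫⁻ x, ENNReal.ofReal ((F x - SN x) ^ 2) ∂μ) ^ ((1 : ℝ) / 2)
          ≤ (ENNReal.ofReal ((ε / 2) ^ 2)) ^ ((1 : ℝ) / 2) := by
        refine ENNReal.rpow_le_rpow ?_ (by norm_num)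
        exact le_trans hTle (ENNReal.ofReal_le_ofReal h1)
      refine le_trans hfin (le_of_eq ?_)
      rw [ENNReal.ofReal_rpow_of_nonneg (sq_nonneg _) (by norm_num)]
      congr 1
      rw [← Real.rpow_natCast (ε / 2) 2, ← Real.rpow_mul (by positivity : (0:ℝ) ≤ ε / 2)]
      norm_num
    -- bound 2 : correction
    have e2 : eLpNorm (fun x => -(h x)) 2 μ ≤ ENNReal.ofReal (ε / 2) := by
      have : (fun x => -(h x)) = -h := rfl
      rw [this, eLpNorm_neg]
      have hsum_fun : h = ∑ k ∈ Finset.range pX, fun x => d N k * φ k x := by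
        funext x
        rw [hhdef]
        simp
      rw [hsum_fun]
      refine le_trans (eLpNorm_sum_le (fun k _ =>
        (continuous_const.mul (hφcont k)).aestronglyMeasurable) one_le_two) ?_
      have heach : ∀ k, eLpNorm (fun x => d N k * φ k x) 2 μ
          = ENNReal.ofReal |d N k| := by
        intro k
        have : (fun x => d N k * φ k x) = d N k • φ k := by
          funext x; simp [smul_eq_mul]
        rw [this, eLpNorm_const_smul, hφnorm k, mul_one, Real.enorm_eq_ofReal_abs]
      calc ∑ k ∈ Finset.range pX, eLpNorm (fun x => d N k * φ k x) 2 μ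
          = ∑ k ∈ Finset.range pX, ENNReal.ofReal |d N k| :=
            Finset.sum_congr rfl fun k _ => heach k
        _ = ENNReal.ofReal (∑ k ∈ Finset.range pX, |d N k|) :=
            (ENNReal.ofReal_sum_of_nonneg fun k _ => abs_nonneg _).symm
        _ ≤ ENNReal.ofReal (ε / 2) :=
            ENNReal.ofReal_le_ofReal (le_trans (hdbound N) h2)
    calc eLpNorm (fun x => F x - SN x) 2 μ + eLpNorm (fun x => -(h x)) 2 μ
        ≤ ENNReal.ofReal (ε / 2) + ENNReal.ofReal (ε / 2) := add_le_add e1 e2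
      _ = ENNReal.ofReal ε := by
          rw [← ENNReal.ofReal_add (by positivity) (by positivity)]
          norm_num
      _ ≤ _ := self_le_add_left _ _
end
end

section
/- Let d ≥ 3, let a, b ∈ ℝ, and let G : [−1,1] → ℝ be an even function (G(−t) = G(t) for all t). Define the inner product kernel K(x,y) := a + b (x·y) + G(x·y) on the unit sphere 𝕊^{d−1} ⊂ ℝ^d. Then K is not strictly positive-definite on 𝕊^{d−1}: there exist an integer n > d, distinct points x_1,…,x_{2n} ∈ 𝕊^{d−1}, and a nonzero vector u ∈ ℝ^{2n} such that Σ_{j=1}^{2n} Σ_{k=1}^{2n} K(x_j,x_k) u_j u_k = 0. In particular, the neural tangent kernel of a two-layer ReLU network, whose spherical harmonic expansion involves only the degrees ℓ = 0, ℓ = 1, and even ℓ ≥ 2, is of this form and hence is not strictly positive-definite on 𝕊^{d−1}. -/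
open Finset
open scoped BigOperators RealInnerProductSpace

noncomputable section

/-- An inner-product kernel on the sphere of the form
`K(x,y) = a + b (x·y) + G(x·y)` with `G` even is not strictly positive-definite on `𝕊^{d−1}`:
there are an integer `n > d`, distinct points `x_1,…,x_{2n}` on the sphere, and a nonzero vector
`u` whose kernel quadratic form vanishes. (The two-layer ReLU neural tangent kernel is of this
form.) -/
theorem inner_product_kernel_not_strictly_positive_definite
    (d : ℕ) (hd : 3 ≤ d) (a b : ℝ) (G : ℝ → ℝ)
    (hG : ∀ t ∈ Set.Icc (-1 : ℝ) 1, G (-t) = G t) :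
    ∃ n : ℕ, d < n ∧
      ∃ x : Fin (2 * n) → EuclideanSpace ℝ (Fin d),
        (∀ j, ‖x j‖ = 1) ∧ Function.Injective x ∧
        ∃ u : Fin (2 * n) → ℝ, u ≠ 0 ∧
          ∑ j, ∑ k, (a + b * ⟪x j, x k⟫ + G ⟪x j, x k⟫) * u j * u k = 0 := by
  classical
  have hdpos : 0 < d := by omega
  have hd0 : (0:ℝ) < d := by exact_mod_cast hdpos
  have hsd : (0:ℝ) < Real.sqrt d := Real.sqrt_pos.mpr hd0
  -- the base points: the standard basis vectors together with the normalized all-ones vector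
  set w : EuclideanSpace ℝ (Fin d) := WithLp.toLp 2 (fun _ => (Real.sqrt d)⁻¹) with hw
  set c : Fin (d+1) → EuclideanSpace ℝ (Fin d) :=
    Fin.lastCases w (fun i => EuclideanSpace.single i 1) with hc
  set v : Fin (d+1) → ℝ := Fin.lastCases (-(Real.sqrt d)) (fun _ => 1) with hv
  have hclast : c (Fin.last d) = w := by simp [hc]
  have hccast : ∀ i : Fin d, c i.castSucc = EuclideanSpace.single i 1 := by
    intro i; simp [hc]
  have hvlast : v (Fin.last d) = -(Real.sqrt d) := by simp [hv]
  have hvcast : ∀ i : Fin d, v i.castSucc = 1 := by intro i; simp [hv]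
  -- coordinates of the base points are nonnegative
  have hcoord : ∀ p j, 0 ≤ c p j := by
    intro p j
    induction p using Fin.lastCases with
    | last => rw [hclast]; positivity
    | cast i => rw [hccast]; rw [EuclideanSpace.single_apply]; positivity
  -- norms
  have hwnorm : ‖w‖ = 1 := by
    rw [EuclideanSpace.norm_eq]
    have : ∀ j : Fin d, ‖w j‖ ^ 2 = (d:ℝ)⁻¹ := by
      intro j
      show ‖(Real.sqrt d)⁻¹‖ ^ 2 = (d:ℝ)⁻¹
      rw [Real.norm_eq_abs, sq_abs, inv_pow, Real.sq_sqrt hd0.le]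
    rw [Finset.sum_congr rfl fun j _ => this j]
    rw [Finset.sum_const, Finset.card_univ, Fintype.card_fin, nsmul_eq_mul,
      mul_inv_cancel₀ hd0.ne']
    exact Real.sqrt_one
  have hcnorm : ∀ p, ‖c p‖ = 1 := by
    intro p
    induction p using Fin.lastCases with
    | last => rw [hclast]; exact hwnorm
    | cast i => rw [hccast]; simp [EuclideanSpace.norm_single]
  -- inner products are nonnegative and in [-1,1]
  have hinner_nn : ∀ p q, (0:ℝ) ≤ ⟪c p, c q⟫ := by
    intro p q
    rw [PiLp.inner_apply]
    refine Finset.sum_nonneg fun j _ => ?_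
    have := mul_nonneg (hcoord p j) (hcoord q j)
    simpa [mul_comm] using this
  have hmem : ∀ p q, ⟪c p, c q⟫ ∈ Set.Icc (-1:ℝ) 1 := by
    intro p q
    have h := abs_real_inner_le_norm (c p) (c q)
    rw [hcnorm p, hcnorm q, mul_one] at h
    exact abs_le.mp h
  have hG' : ∀ p q, G (-⟪c p, c q⟫) = G ⟪c p, c q⟫ := fun p q => hG _ (hmem p q)
  have hinner_self : ∀ p, ⟪c p, c p⟫ = (1:ℝ) := by
    intro p
    rw [real_inner_self_eq_norm_sq, hcnorm p]; norm_num
  -- injectivity of the base points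
  have hcinj : Function.Injective c := by
    have hws : ∀ i : Fin d, w ≠ EuclideanSpace.single i 1 := by
      intro i h
      set j : Fin d := if i = ⟨0, hdpos⟩ then ⟨1, by omega⟩ else ⟨0, hdpos⟩ with hj
      have hji : j ≠ i := by
        rw [hj]; split
        · rename_i hcase; rw [hcase]; intro hcontra
          exact absurd (congrArg Fin.val hcontra) (by norm_num)
        · rename_i hcase; intro hcontra; exact hcase hcontra.symm
      have := congrFun (congrArg WithLp.ofLp h) j
      rw [EuclideanSpace.single_apply, if_neg hji] at this
      exact absurd this (by positivity)
    intro p q h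
    induction p using Fin.lastCases with
    | last =>
      induction q using Fin.lastCases with
      | last => rfl
      | cast j =>
        rw [hclast, hccast] at h
        exact absurd h (hws j)
    | cast i =>
      induction q using Fin.lastCases with
      | last =>
        rw [hclast, hccast] at h
        exact absurd h.symm (hws i)
      | cast j =>
        rw [hccast, hccast] at h
        have hij : i = j := by
          by_contra hne
          have := congrFun (congrArg WithLp.ofLp h) i
          rw [EuclideanSpace.single_apply, EuclideanSpace.single_apply,
            if_pos rfl, if_neg hne] at this
          norm_num at this
        rw [hij]
  -- the linear combination vanishes
  have hsum : ∑ p, v p • c p = (0 : EuclideanSpace ℝ (Fin d)) := by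
    ext j
    have happ : (∑ p, v p • c p) j = ∑ p, v p * c p j := by
      rw [WithLp.ofLp_sum, Finset.sum_apply]; rfl
    rw [happ]
    show ∑ p, v p * c p j = (0:ℝ)
    rw [Fin.sum_univ_castSucc]
    have h1 : ∀ i : Fin d, v i.castSucc * c i.castSucc j
        = if j = i then (1:ℝ) else 0 := by
      intro i
      rw [hvcast, hccast, one_mul, EuclideanSpace.single_apply]
    rw [Finset.sum_congr rfl fun i _ => h1 i, Finset.sum_ite_eq]
    rw [hvlast, hclast]
    show (if j ∈ Finset.univ then (1:ℝ) else 0) + -(Real.sqrt d) * (Real.sqrt d)⁻¹ = 0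
    rw [if_pos (Finset.mem_univ j), neg_mul, mul_inv_cancel₀ hsd.ne']
    ring
  -- assemble the point configuration
  set X : Fin (d+1) ⊕ Fin (d+1) → EuclideanSpace ℝ (Fin d) :=
    Sum.elim c (fun p => -(c p)) with hX
  set U : Fin (d+1) ⊕ Fin (d+1) → ℝ := Sum.elim v (fun p => -(v p)) with hU
  set e : Fin (d+1) ⊕ Fin (d+1) ≃ Fin (2 * (d+1)) :=
    finSumFinEquiv.trans (finCongr (two_mul (d+1)).symm) with he
  refine ⟨d + 1, by omega, fun j => X (e.symm j), ?_, ?_, fun j => U (e.symm j), ?_, ?_⟩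
  · -- norms are one
    have key : ∀ s, ‖X s‖ = 1 := by
      rintro (p | p) <;>
        simp only [hX, Sum.elim_inl, Sum.elim_inr, norm_neg] <;> exact hcnorm p
    intro j
    exact key _
  · -- injectivity
    have hXinj : Function.Injective X := by
      rintro (p | p) (q | q) h <;> simp only [hX, Sum.elim_inl, Sum.elim_inr] at h
      · exact congrArg Sum.inl (hcinj h)
      · exfalso
        have h1 : ⟪c p, c q⟫ = -(1:ℝ) := by
          rw [h, inner_neg_left, hinner_self]
        have := hinner_nn p q
        rw [h1] at this; linarith
      · exfalso
        have h1 : ⟪c p, c q⟫ = -(1:ℝ) := by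
          rw [← h, inner_neg_right, hinner_self]
        have := hinner_nn p q
        rw [h1] at this; linarith
      · exact congrArg Sum.inr (hcinj (neg_injective h))
    exact hXinj.comp e.symm.injective
  · -- nonzero vector
    intro h0
    have h1 := congrFun h0 (e (Sum.inl (⟨0, by omega⟩ : Fin (d+1))))
    simp only [Equiv.symm_apply_apply, Pi.zero_apply] at h1
    have h2 : (⟨0, by omega⟩ : Fin (d+1)) = (⟨0, hdpos⟩ : Fin d).castSucc := rfl
    rw [hU, Sum.elim_inl, h2, hvcast] at h1
    norm_num at h1
  · -- the quadratic form vanishes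
    have step1 : ∑ j, ∑ k,
        (a + b * ⟪X (e.symm j), X (e.symm k)⟫ + G ⟪X (e.symm j), X (e.symm k)⟫)
          * U (e.symm j) * U (e.symm k)
        = ∑ s, ∑ t, (a + b * ⟪X s, X t⟫ + G ⟪X s, X t⟫) * U s * U t := by
      rw [← Equiv.sum_comp e (fun j => ∑ k,
        (a + b * ⟪X (e.symm j), X (e.symm k)⟫ + G ⟪X (e.symm j), X (e.symm k)⟫)
          * U (e.symm j) * U (e.symm k))]
      refine Finset.sum_congr rfl fun s _ => ?_
      rw [← Equiv.sum_comp e (fun k =>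
        (a + b * ⟪X (e.symm (e s)), X (e.symm k)⟫ + G ⟪X (e.symm (e s)), X (e.symm k)⟫)
          * U (e.symm (e s)) * U (e.symm k))]
      simp only [Equiv.symm_apply_apply]
    rw [step1]
    set T : Fin (d+1) ⊕ Fin (d+1) → Fin (d+1) ⊕ Fin (d+1) → ℝ :=
      fun s t => (a + b * ⟪X s, X t⟫ + G ⟪X s, X t⟫) * U s * U t with hT
    show ∑ s, ∑ t, T s t = 0
    have hpair : ∀ p q, T (Sum.inl p) (Sum.inl q) + T (Sum.inl p) (Sum.inr q)
        + T (Sum.inr p) (Sum.inl q) + T (Sum.inr p) (Sum.inr q)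
        = (4 * b) * ⟪v p • c p, v q • c q⟫ := by
      intro p q
      simp only [hT, hX, hU, Sum.elim_inl, Sum.elim_inr, inner_neg_left, inner_neg_right,
        neg_neg]
      rw [real_inner_smul_left, real_inner_smul_right, hG' p q]
      ring
    have hsplit : ∑ s, ∑ t, T s t
        = ∑ p, ∑ q, (T (Sum.inl p) (Sum.inl q) + T (Sum.inl p) (Sum.inr q)
            + T (Sum.inr p) (Sum.inl q) + T (Sum.inr p) (Sum.inr q)) := by
      simp only [Fintype.sum_sum_type, Finset.sum_add_distrib]
      ring
    rw [hsplit, Finset.sum_congr rfl fun p _ => Finset.sum_congr rfl fun q _ => hpair p q]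
    simp_rw [← Finset.mul_sum, ← inner_sum]
    rw [← sum_inner, hsum, inner_zero_left]
    ring
end
end
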